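/- arXiv:2212.01024 — 4 statements merged into one kernel-verified Lean document; each statement's English description precedes it below -/
import Mathlib

section
/- Any finite or countable union of uniformly recurrent languages L satisfies the measure condition: there exists a shift-invariant Borel probability measure μ on the associated subshift (X_L, S) with μ([w]) > 0 for every w ∈ L. -/
open List Set

variable {A : Type*}

/-- A (factorial, extendable) language over an alphabet `A`. -/
def IsLanguage (L : Set (List A)) : Prop :=
  (∀ w ∈ L, ∀ v : List A, v <:+: w → v ∈ L) ∧
  (∀ w ∈ L, ∃ a : A, a :: w ∈ L) ∧
  (∀ w ∈ L, ∃ a : A, w ++ [a] ∈ L)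

/-- Arrival set `A(w)`. -/
def arrSet (L : Set (List A)) (w : List A) : Set A := {a | a :: w ∈ L}

/-- Departure set `D(w)`. -/
def depSet (L : Set (List A)) (w : List A) : Set A := {a | w ++ [a] ∈ L}

def Bispecial (L : Set (List A)) (w : List A) : Prop :=
  1 < (arrSet L w).ncard ∧ 1 < (depSet L w).ncard

/-- `m(w) = #{awb ∈ L}`. -/
noncomputable def extCount (L : Set (List A)) (w : List A) : ℕ :=
  {p : A × A | p.1 :: (w ++ [p.2]) ∈ L}.ncard

def StrongBispecial (L : Set (List A)) (w : List A) : Prop :=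
  Bispecial L w ∧ (arrSet L w).ncard + (depSet L w).ncard - 1 < extCount L w

def WeakBispecial (L : Set (List A)) (w : List A) : Prop :=
  Bispecial L w ∧ extCount L w < (arrSet L w).ncard + (depSet L w).ncard - 1

def LocallyStrongBispecial (L : Set (List A)) (w : List A) : Prop :=
  Bispecial L w ∧ ∃ A' D' : Set A, A'.Nonempty ∧ D'.Nonempty ∧
    A' ⊆ arrSet L w ∧ D' ⊆ depSet L w ∧
    A'.ncard + D'.ncard - 1 <
      {p : A × A | p.1 ∈ A' ∧ p.2 ∈ D' ∧ p.1 :: (w ++ [p.2]) ∈ L}.ncard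

/-- The order condition at a single bispecial word, for orders `rA`, `rD`. -/
def OrderConditionAt (L : Set (List A)) (w : List A) (rA rD : A → A → Prop) : Prop :=
  ∀ a b c d : A, a ≠ b → c ≠ d →
    a :: (w ++ [c]) ∈ L → b :: (w ++ [d]) ∈ L → (rA a b ↔ rD c d)

/-- The local order condition. -/
def LocalOrderCondition (L : Set (List A)) : Prop :=
  ∀ w : List A, Bispecial L w → ∃ rA rD : A → A → Prop,
    IsStrictTotalOrder A rA ∧ IsStrictTotalOrder A rD ∧ OrderConditionAt L w rA rD

/-- `a` and `a'` are consecutive in the strict order `r`. -/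
def ConsecutiveIn (r : A → A → Prop) (a a' : A) : Prop :=
  r a a' ∧ ∀ c : A, ¬ (r a c ∧ r c a')

/-- A connection for the bispecial word `w`, with respect to orders `rA`, `rD`. -/
def ConnectionWith (L : Set (List A)) (w : List A) (rA rD : A → A → Prop) : Prop :=
  ∃ a a' b b' : A, ConsecutiveIn rA a a' ∧ ConsecutiveIn rD b b' ∧
    a :: (w ++ [b]) ∈ L ∧ a' :: (w ++ [b']) ∈ L ∧
    a :: (w ++ [b']) ∉ L ∧ a' :: (w ++ [b]) ∉ L

/-- `w` has a connection (for some orders realizing the order condition at `w`). -/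
def HasConnection (L : Set (List A)) (w : List A) : Prop :=
  ∃ rA rD : A → A → Prop, IsStrictTotalOrder A rA ∧ IsStrictTotalOrder A rD ∧
    OrderConditionAt L w rA rD ∧ ConnectionWith L w rA rD

/-- Complexity function `p(n)`. -/
noncomputable def complexityFn (L : Set (List A)) (n : ℕ) : ℕ :=
  {w ∈ L | w.length = n}.ncard

def UniformlyRecurrent (L : Set (List A)) : Prop :=
  ∀ v ∈ L, ∃ n : ℕ, ∀ u ∈ L, u.length = n → v <:+: u

def LangRecurrent (L : Set (List A)) : Prop :=
  ∀ v ∈ L, ∃ u : List A, u ≠ [] ∧ v ++ u ∈ L ∧ v <:+ v ++ u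

def LangAperiodic (L : Set (List A)) : Prop :=
  ∀ w ∈ L, w ≠ [] → ∃ n : ℕ, (List.replicate n w).flatten ∉ L

def LeftSpecial (L : Set (List A)) (w : List A) : Prop := 1 < (arrSet L w).ncard

def RightSpecial (L : Set (List A)) (w : List A) : Prop := 1 < (depSet L w).ncard

/-- The two-sided subshift associated to `L`. -/
def XL (L : Set (List A)) : Set (ℤ → A) :=
  {x | ∀ (m : ℤ) (n : ℕ), (List.ofFn fun i : Fin n => x (m + (i : ℕ))) ∈ L}

def occursAtZ (x : ℤ → A) (m : ℤ) (w : List A) : Prop :=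
  (List.ofFn fun i : Fin w.length => x (m + (i : ℕ))) = w

def FactorsZ (x : ℤ → A) : Set (List A) := {w | ∃ m : ℤ, occursAtZ x m w}

def RightRec (x : ℤ → A) : Prop :=
  ∀ w ∈ FactorsZ x, ∀ N : ℤ, ∃ m : ℤ, N ≤ m ∧ occursAtZ x m w

def LeftRec (x : ℤ → A) : Prop :=
  ∀ w ∈ FactorsZ x, ∀ N : ℤ, ∃ m : ℤ, m ≤ N ∧ occursAtZ x m w

def RecurrentZ (x : ℤ → A) : Prop := RightRec x ∧ LeftRec x

/-- The `F`-flipped order condition, with orders `rA` (arrival) and `rD` (departure):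
the departure order is reversed when the number of `F`-letters of `w` is odd. -/
def FlippedOC [DecidableEq A] (L : Set (List A)) (F : Finset A)
    (rA rD : A → A → Prop) : Prop :=
  ∀ w : List A, Bispecial L w → ∀ a b c d : A, a ≠ b → c ≠ d →
    a :: (w ++ [c]) ∈ L → b :: (w ++ [d]) ∈ L →
    (rA a b ↔ if Even (w.countP fun e => decide (e ∈ F)) then rD c d else rD d c)

/-- A generalized `F`-flipped interval exchange transformation. -/
structure GIET (A : Type*) (F : Finset A) where
  l : A → ℝ
  r : A → ℝ
  T : ℝ → ℝ
  lt : ∀ e, l e < r e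
  sub : ∀ e, Set.Ioo (l e) (r e) ⊆ Set.Ioo (0 : ℝ) 1
  disj : ∀ e f, e ≠ f → Disjoint (Set.Ioo (l e) (r e)) (Set.Ioo (l f) (r f))
  cover : Set.Icc (0 : ℝ) 1 = ⋃ e, Set.Icc (l e) (r e)
  cont : ∀ e, ContinuousOn T (Set.Ioo (l e) (r e))
  inc : ∀ e ∉ F, StrictMonoOn T (Set.Ioo (l e) (r e))
  dec : ∀ e ∈ F, StrictAntiOn T (Set.Ioo (l e) (r e))
  l' : A → ℝ
  r' : A → ℝ
  lt' : ∀ e, l' e < r' e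
  img : ∀ e, T '' Set.Ioo (l e) (r e) = Set.Ioo (l' e) (r' e)
  disj' : ∀ e f, e ≠ f → Disjoint (Set.Ioo (l' e) (r' e)) (Set.Ioo (l' f) (r' f))
  cover' : Set.Icc (0 : ℝ) 1 = ⋃ e, Set.Icc (l' e) (r' e)

variable {F : Finset A}

/-- A bi-infinite orbit of `G`, with symbolic itinerary `u`. -/
def GIET.IsOrbit (G : GIET A F) (u : ℤ → A) (p : ℤ → ℝ) : Prop :=
  (∀ n : ℤ, G.T (p n) = p (n + 1)) ∧
  ∀ n : ℤ, p n ∈ Set.Ioo (G.l (u n)) (G.r (u n))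

/-- The natural coding `L(T)`: the language generated by all trajectories. -/
def GIET.lang (G : GIET A F) : Set (List A) :=
  {w | ∃ (u : ℤ → A) (p : ℤ → ℝ), G.IsOrbit u p ∧
    ∃ m : ℤ, (List.ofFn fun i : Fin w.length => u (m + (i : ℕ))) = w}

open MeasureTheory

/-- The shift map on `A^ℤ`. -/
def shiftZ (x : ℤ → A) : ℤ → A := fun n => x (n + 1)

section S8Aux
open MeasureTheory Filter Set
open scoped ENNReal

namespace S8

noncomputable def limU (f : ℕ → ℝ≥0∞) : ℝ≥0∞ :=
  lim (Ultrafilter.map f (hyperfilter ℕ) : Filter ℝ≥0∞)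

lemma tendsto_limU (f : ℕ → ℝ≥0∞) : Tendsto f (hyperfilter ℕ) (nhds (limU f)) := by
  have h : ∃ c, (Ultrafilter.map f (hyperfilter ℕ) : Filter ℝ≥0∞) ≤ nhds c := by
    obtain ⟨c, -, hc⟩ := isCompact_univ.ultrafilter_le_nhds (Ultrafilter.map f (hyperfilter ℕ))
      (by simp)
    exact ⟨c, hc⟩
  have := le_nhds_lim h
  rw [Tendsto, ← Ultrafilter.coe_map]
  exact this

lemma limU_eq {f : ℕ → ℝ≥0∞} {c : ℝ≥0∞} (h : Tendsto f (hyperfilter ℕ) (nhds c)) :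
    limU f = c :=
  tendsto_nhds_unique (tendsto_limU f) h

lemma limU_const (c : ℝ≥0∞) : limU (fun _ => c) = c := limU_eq tendsto_const_nhds

lemma limU_le {f g : ℕ → ℝ≥0∞} (h : ∀ᶠ N in (hyperfilter ℕ : Filter ℕ), f N ≤ g N) :
    limU f ≤ limU g :=
  le_of_tendsto_of_tendsto (tendsto_limU f) (tendsto_limU g) h

lemma limU_add (f g : ℕ → ℝ≥0∞) : limU (fun N => f N + g N) = limU f + limU g :=
  limU_eq ((tendsto_limU f).add (tendsto_limU g))

lemma limU_eventually_const {f : ℕ → ℝ≥0∞} {c : ℝ≥0∞}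
    (h : ∀ᶠ N in (hyperfilter ℕ : Filter ℕ), f N = c) : limU f = c :=
  limU_eq (Tendsto.congr' (EventuallyEq.symm h) tendsto_const_nhds)

lemma eventually_hyper_of_ge {P : ℕ → Prop} (n₀ : ℕ) (h : ∀ N, n₀ ≤ N → P N) :
    ∀ᶠ N in (hyperfilter ℕ : Filter ℕ), P N := by
  apply Filter.le_def.1 (hyperfilter_le_cofinite)
  rw [Nat.cofinite_eq_atTop]
  exact eventually_atTop.2 ⟨n₀, h⟩

lemma limU_inv_nat : limU (fun N => ((N : ℝ≥0∞))⁻¹) = 0 := by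
  apply limU_eq
  exact ENNReal.tendsto_inv_nat_nhds_zero.mono_left
    (by rw [← Nat.cofinite_eq_atTop]; exact hyperfilter_le_cofinite)

variable {B : Type*}

/-- forward shift orbit: `orb x k = S^k x`. -/
def orb (x : ℤ → B) (k : ℕ) : ℤ → B := fun j => x (j + k)

lemma orb_zero (x : ℤ → B) : orb x 0 = x := by funext j; simp [orb]

lemma orb_shift (x : ℤ → B) (k : ℕ) : orb (shiftZ x) k = orb x (k + 1) := by
  funext j; simp only [orb, shiftZ]; congr 1; push_cast; ring

noncomputable def cnt (x : ℤ → B) (E : Set (ℤ → B)) (N : ℕ) : ℝ≥0∞ :=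
  ∑ k ∈ Finset.range N, E.indicator (fun _ => (1 : ℝ≥0∞)) (orb x k)

noncomputable def av (x : ℤ → B) (E : Set (ℤ → B)) (N : ℕ) : ℝ≥0∞ := cnt x E N / N

noncomputable def freq (x : ℤ → B) (E : Set (ℤ → B)) : ℝ≥0∞ := limU (av x E)

lemma freq_empty (x : ℤ → B) : freq x (∅ : Set (ℤ → B)) = 0 := by
  have : av x ∅ = fun _ => 0 := by
    funext N; simp [av, cnt]
  rw [freq, this, limU_const]

lemma cnt_of_mem {x : ℤ → B} {E : Set (ℤ → B)} (h : ∀ k, orb x k ∈ E) (N : ℕ) :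
    cnt x E N = N := by
  have : ∀ k ∈ Finset.range N, E.indicator (fun _ => (1:ℝ≥0∞)) (orb x k) = 1 :=
    fun k _ => Set.indicator_of_mem (h k) _
  rw [cnt, Finset.sum_congr rfl this, Finset.sum_const, Finset.card_range, nsmul_eq_mul, mul_one]

lemma freq_of_forall_mem {x : ℤ → B} {E : Set (ℤ → B)} (h : ∀ k, orb x k ∈ E) :
    freq x E = 1 := by
  apply limU_eventually_const
  apply eventually_hyper_of_ge 1
  intro N hN
  rw [av, cnt_of_mem h]
  exact ENNReal.div_self (Nat.cast_ne_zero.2 (by omega)) (by simp)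

lemma freq_univ (x : ℤ → B) : freq x univ = 1 :=
  freq_of_forall_mem (fun _ => trivial)

lemma cnt_add_split (x : ℤ → B) (t s : Set (ℤ → B)) (N : ℕ) :
    cnt x (t ∩ s) N + cnt x (t \ s) N = cnt x t N := by
  rw [cnt, cnt, cnt, ← Finset.sum_add_distrib]
  refine Finset.sum_congr rfl fun k _ => ?_
  classical
  by_cases ht : orb x k ∈ t <;> by_cases hs : orb x k ∈ s <;>
    simp [Set.indicator_apply, Set.mem_inter_iff, Set.mem_diff, ht, hs]

lemma freq_add_split (x : ℤ → B) (t s : Set (ℤ → B)) :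
    freq x (t ∩ s) + freq x (t \ s) = freq x t := by
  rw [freq, freq, freq, ← limU_add]
  congr 1
  funext N
  rw [av, av, av, ENNReal.div_add_div_same, cnt_add_split]

lemma freq_finset_subadd {x : ℤ → B} {E : Set (ℤ → B)} {ι : Type*} {F : Finset ι}
    {t : ι → Set (ℤ → B)} (h : E ⊆ ⋃ i ∈ F, t i) :
    freq x E ≤ ∑ i ∈ F, freq x (t i) := by
  have hpt : ∀ N, av x E N ≤ ∑ i ∈ F, av x (t i) N := by
    intro N
    have hcnt : cnt x E N ≤ ∑ i ∈ F, cnt x (t i) N := by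
      rw [cnt]
      calc ∑ k ∈ Finset.range N, E.indicator (fun _ => (1:ℝ≥0∞)) (orb x k)
          ≤ ∑ k ∈ Finset.range N, ∑ i ∈ F, (t i).indicator (fun _ => (1:ℝ≥0∞)) (orb x k) := by
            refine Finset.sum_le_sum fun k _ => ?_
            by_cases hk : orb x k ∈ E
            · obtain ⟨i, hiF, hit⟩ := by
                have := h hk; simpa using this
              rw [Set.indicator_of_mem hk]
              calc (1:ℝ≥0∞) = (t i).indicator (fun _ => (1:ℝ≥0∞)) (orb x k) := by
                    rw [Set.indicator_of_mem hit]
                _ ≤ _ := Finset.single_le_sum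
                    (f := fun i => (t i).indicator (fun _ => (1:ℝ≥0∞)) (orb x k))
                    (fun _ _ => zero_le) hiF
            · rw [Set.indicator_of_notMem hk]; exact zero_le
        _ = ∑ i ∈ F, cnt x (t i) N := Finset.sum_comm
    simp only [av, div_eq_mul_inv]
    calc cnt x E N * ((N:ℝ≥0∞))⁻¹ ≤ (∑ i ∈ F, cnt x (t i) N) * ((N:ℝ≥0∞))⁻¹ :=
          mul_le_mul_left hcnt _
      _ = ∑ i ∈ F, cnt x (t i) N * ((N:ℝ≥0∞))⁻¹ := Finset.sum_mul _ _ _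
  refine le_of_tendsto_of_tendsto (tendsto_limU _) (tendsto_finset_sum F fun i _ => tendsto_limU (av x (t i))) ?_
  exact Eventually.of_forall hpt

lemma shiftZ_orb (x : ℤ → B) (k : ℕ) : shiftZ (orb x k) = orb x (k + 1) := by
  funext j; simp only [shiftZ, orb]; congr 1; push_cast; ring

lemma freq_preimage_shift (x : ℤ → B) (E : Set (ℤ → B)) :
    freq x (shiftZ ⁻¹' E) = freq x E := by
  classical
  set g : ℕ → ℝ≥0∞ := fun k => E.indicator (fun _ => (1:ℝ≥0∞)) (orb x k) with hg
  have hbound : ∀ k, g k ≤ 1 := by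
    intro k; rw [hg]; simp only [Set.indicator_apply]; split <;> simp
  have hA : ∀ N, cnt x (shiftZ ⁻¹' E) N = ∑ k ∈ Finset.range N, g (k + 1) := by
    intro N; refine Finset.sum_congr rfl fun k _ => ?_
    simp [hg, Set.indicator_apply, Set.mem_preimage, shiftZ_orb]
  have hcntE : ∀ N, cnt x E N = ∑ k ∈ Finset.range N, g k := fun N => rfl
  have key : ∀ N, cnt x (shiftZ ⁻¹' E) N + g 0 = cnt x E N + g N := by
    intro N
    rw [hA, hcntE, ← Finset.sum_range_succ' g N, Finset.sum_range_succ]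
  have h1 : ∀ N : ℕ, av x (shiftZ ⁻¹' E) N ≤ av x E N + (N : ℝ≥0∞)⁻¹ := by
    intro N
    have : cnt x (shiftZ ⁻¹' E) N ≤ cnt x E N + 1 := by
      calc cnt x (shiftZ ⁻¹' E) N ≤ cnt x (shiftZ ⁻¹' E) N + g 0 := le_self_add
        _ = cnt x E N + g N := key N
        _ ≤ cnt x E N + 1 := add_le_add_right (hbound N) _
    calc av x (shiftZ ⁻¹' E) N ≤ (cnt x E N + 1) / N := ENNReal.div_le_div_right this _
      _ = av x E N + (N : ℝ≥0∞)⁻¹ := by rw [ENNReal.add_div, one_div]; rfl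
  have h2 : ∀ N : ℕ, av x E N ≤ av x (shiftZ ⁻¹' E) N + (N : ℝ≥0∞)⁻¹ := by
    intro N
    have : cnt x E N ≤ cnt x (shiftZ ⁻¹' E) N + 1 := by
      calc cnt x E N ≤ cnt x E N + g N := le_self_add
        _ = cnt x (shiftZ ⁻¹' E) N + g 0 := (key N).symm
        _ ≤ cnt x (shiftZ ⁻¹' E) N + 1 := add_le_add_right (hbound 0) _
    calc av x E N ≤ (cnt x (shiftZ ⁻¹' E) N + 1) / N := ENNReal.div_le_div_right this _
      _ = av x (shiftZ ⁻¹' E) N + (N : ℝ≥0∞)⁻¹ := by rw [ENNReal.add_div, one_div]; rfl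
  have t1 : Tendsto (fun N : ℕ => av x E N + (N : ℝ≥0∞)⁻¹) (hyperfilter ℕ)
      (nhds (freq x E)) := by
    have := (tendsto_limU (av x E)).add
      (limU_inv_nat ▸ tendsto_limU (fun N : ℕ => ((N : ℝ≥0∞))⁻¹))
    simpa [freq] using this
  have t2 : Tendsto (fun N : ℕ => av x (shiftZ ⁻¹' E) N + (N : ℝ≥0∞)⁻¹) (hyperfilter ℕ)
      (nhds (freq x (shiftZ ⁻¹' E))) := by
    have := (tendsto_limU (av x (shiftZ ⁻¹' E))).add
      (limU_inv_nat ▸ tendsto_limU (fun N : ℕ => ((N : ℝ≥0∞))⁻¹))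
    simpa [freq] using this
  refine le_antisymm ?_ ?_
  · exact le_of_tendsto_of_tendsto (tendsto_limU _) t1 (Eventually.of_forall h1)
  · exact le_of_tendsto_of_tendsto (tendsto_limU _) t2 (Eventually.of_forall h2)

end S8

namespace S8

variable {B : Type*}

def DepOn (E : Set (ℤ → B)) (n : ℕ) : Prop :=
  ∀ x y : ℤ → B, (∀ k : ℤ, -(n : ℤ) ≤ k → k ≤ (n : ℤ) → x k = y k) → x ∈ E → y ∈ E

def Alg (B : Type*) : Set (Set (ℤ → B)) := {E | ∃ n, DepOn E n}

def mTop (B : Type*) : MeasurableSpace (ℤ → B) :=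
  @MeasurableSpace.pi ℤ (fun _ => B) (fun _ => ⊤)

lemma DepOn.mono {E : Set (ℤ → B)} {n m : ℕ} (h : DepOn E n) (hnm : n ≤ m) : DepOn E m :=
  fun x y hxy hx => h x y (fun k h1 h2 => hxy k (by omega) (by omega)) hx

lemma depOn_empty : DepOn (∅ : Set (ℤ → B)) 0 := fun _ _ _ h => h.elim

lemma depOn_univ : DepOn (univ : Set (ℤ → B)) 0 := fun _ _ _ _ => trivial

lemma DepOn.compl {E : Set (ℤ → B)} {n : ℕ} (h : DepOn E n) : DepOn Eᶜ n :=
  fun x y hxy hx hy => hx (h y x (fun k h1 h2 => (hxy k h1 h2).symm) hy)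

lemma DepOn.inter {E F : Set (ℤ → B)} {n m : ℕ} (hE : DepOn E n) (hF : DepOn F m) :
    DepOn (E ∩ F) (max n m) := fun x y hxy hx =>
  ⟨(hE.mono (le_max_left n m)) x y hxy hx.1, (hF.mono (le_max_right n m)) x y hxy hx.2⟩

lemma DepOn.diff {E F : Set (ℤ → B)} {n m : ℕ} (hE : DepOn E n) (hF : DepOn F m) :
    DepOn (E \ F) (max n m) := fun x y hxy hx =>
  ⟨(hE.mono (le_max_left n m)) x y hxy hx.1,
   fun hy => hx.2 ((hF.mono (le_max_right n m)) y x
      (fun k h1 h2 => (hxy k h1 h2).symm) hy)⟩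

lemma DepOn.preimage_shift {E : Set (ℤ → B)} {n : ℕ} (h : DepOn E n) :
    DepOn (shiftZ ⁻¹' E) (n + 1) := by
  intro x y hxy hx
  exact h (shiftZ x) (shiftZ y) (fun k h1 h2 => hxy (k + 1) (by push_cast; omega) (by push_cast; omega)) hx

lemma alg_empty : (∅ : Set (ℤ → B)) ∈ Alg B := ⟨0, depOn_empty⟩
lemma alg_univ : (univ : Set (ℤ → B)) ∈ Alg B := ⟨0, depOn_univ⟩
lemma alg_inter {E F : Set (ℤ → B)} (hE : E ∈ Alg B) (hF : F ∈ Alg B) : E ∩ F ∈ Alg B := by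
  obtain ⟨n, hn⟩ := hE; obtain ⟨m, hm⟩ := hF; exact ⟨max n m, hn.inter hm⟩
lemma alg_diff {E F : Set (ℤ → B)} (hE : E ∈ Alg B) (hF : F ∈ Alg B) : E \ F ∈ Alg B := by
  obtain ⟨n, hn⟩ := hE; obtain ⟨m, hm⟩ := hF; exact ⟨max n m, hn.diff hm⟩
lemma alg_preimage_shift {E : Set (ℤ → B)} (hE : E ∈ Alg B) : shiftZ ⁻¹' E ∈ Alg B := by
  obtain ⟨n, hn⟩ := hE; exact ⟨n + 1, hn.preimage_shift⟩

/-- the central window of radius `n`. -/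
def win (n : ℕ) : (ℤ → B) → (Fin (2 * n + 1) → B) := fun x i => x ((i : ℤ) - n)

lemma agree_of_fin {n : ℕ} {y z : ℤ → B}
    (h : ∀ i : Fin (2 * n + 1), y ((i : ℤ) - n) = z ((i : ℤ) - n)) :
    ∀ k : ℤ, -(n : ℤ) ≤ k → k ≤ (n : ℤ) → y k = z k := by
  intro k h1 h2
  have hlt : (k + n).toNat < 2 * n + 1 := by omega
  have := h ⟨(k + n).toNat, hlt⟩
  have hco : (((⟨(k + n).toNat, hlt⟩ : Fin (2 * n + 1)) : ℤ)) - n = k := by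
    simp only [Fin.val_mk]
    omega
  rwa [hco] at this

lemma DepOn.eq_biUnion {E : Set (ℤ → B)} {n : ℕ} (h : DepOn E n) :
    E = ⋃ f ∈ win n '' E, {y : ℤ → B | ∀ i : Fin (2 * n + 1), y ((i : ℤ) - n) = f i} := by
  ext y; constructor
  · intro hy
    exact mem_biUnion (mem_image_of_mem _ hy) (fun i => rfl)
  · intro hy
    simp only [mem_iUnion, exists_prop] at hy
    obtain ⟨f, ⟨z, hz, rfl⟩, hyf⟩ := hy
    exact h z y (agree_of_fin (fun i => (hyf i).symm)) hz

lemma measurableSet_of_depOn [Finite B] {E : Set (ℤ → B)} {n : ℕ} (h : DepOn E n) :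
    MeasurableSet[mTop B] E := by
  rw [h.eq_biUnion]
  refine MeasurableSet.biUnion (Set.to_countable _) (fun f _ => ?_)
  have hrw : {y : ℤ → B | ∀ i : Fin (2 * n + 1), y ((i : ℤ) - n) = f i}
      = ⋂ i : Fin (2 * n + 1), (fun y : ℤ → B => y ((i : ℤ) - n)) ⁻¹' {f i} := by
    ext y; simp [Set.mem_iInter]
  rw [hrw]
  exact MeasurableSet.iInter (fun i =>
    (@measurable_pi_apply ℤ (fun _ => B) (fun _ => ⊤) ((i : ℤ) - n))
      (MeasurableSpace.measurableSet_top))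

lemma measurableSet_of_alg [Finite B] {E : Set (ℤ → B)} (h : E ∈ Alg B) :
    MeasurableSet[mTop B] E := by
  obtain ⟨n, hn⟩ := h; exact measurableSet_of_depOn hn

lemma isOpen_of_depOn [TopologicalSpace B] [DiscreteTopology B]
    {E : Set (ℤ → B)} {n : ℕ} (h : DepOn E n) : IsOpen E := by
  rw [h.eq_biUnion]
  refine isOpen_biUnion (fun f _ => ?_)
  have hrw : {y : ℤ → B | ∀ i : Fin (2 * n + 1), y ((i : ℤ) - n) = f i}
      = ⋂ i : Fin (2 * n + 1), (fun y : ℤ → B => y ((i : ℤ) - n)) ⁻¹' {f i} := by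
    ext y; simp [Set.mem_iInter]
  rw [hrw]
  exact isOpen_iInter_of_finite (fun i =>
    (continuous_apply ((i : ℤ) - n)).isOpen_preimage _ (isOpen_discrete _))

lemma isClosed_of_depOn [Finite B] [TopologicalSpace B] [DiscreteTopology B]
    {E : Set (ℤ → B)} {n : ℕ} (h : DepOn E n) : IsClosed E := by
  rw [h.eq_biUnion]
  refine Set.Finite.isClosed_biUnion (Set.toFinite _) (fun f _ => ?_)
  have hrw : {y : ℤ → B | ∀ i : Fin (2 * n + 1), y ((i : ℤ) - n) = f i}
      = ⋂ i : Fin (2 * n + 1), (fun y : ℤ → B => y ((i : ℤ) - n)) ⁻¹' {f i} := by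
    ext y; simp [Set.mem_iInter]
  rw [hrw]
  exact isClosed_iInter (fun i =>
    (isClosed_discrete _).preimage (continuous_apply ((i : ℤ) - n)))

lemma ofFn_infix (x : ℤ → B) {m₁ m₂ : ℤ} {l₁ l₂ : ℕ} (h1 : m₂ ≤ m₁)
    (h2 : m₁ + l₁ ≤ m₂ + l₂) :
    (List.ofFn fun i : Fin l₁ => x (m₁ + i)) <:+: (List.ofFn fun i : Fin l₂ => x (m₂ + i)) := by
  set d := (m₁ - m₂).toNat with hd
  have hdz : (d : ℤ) = m₁ - m₂ := Int.toNat_of_nonneg (by omega)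
  have heq : (List.ofFn fun i : Fin l₁ => x (m₁ + i))
      = ((List.ofFn fun i : Fin l₂ => x (m₂ + i)).drop d).take l₁ := by
    apply List.ext_getElem
    · rw [List.length_take, List.length_drop, List.length_ofFn, List.length_ofFn]
      omega
    · intro i hi₁ hi₂
      rw [List.getElem_take, List.getElem_drop, List.getElem_ofFn, List.getElem_ofFn]
      congr 1
      simp only [Fin.val_mk]
      push_cast
      omega
  rw [heq]
  exact ((List.take_prefix _ _).isInfix.trans (List.drop_suffix _ _).isInfix)

end S8

namespace S8

variable {B : Type*}

def cwin (L : Set (List B)) (n : ℕ) : Set (ℤ → B) :=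
  {x | (List.ofFn fun i : Fin (2 * n + 1) => x (-(n : ℤ) + i)) ∈ L}

lemma depOn_cwin (L : Set (List B)) (n : ℕ) : DepOn (cwin L n) n := by
  intro x y hxy hx
  have hw : (List.ofFn fun i : Fin (2 * n + 1) => y (-(n : ℤ) + i))
      = (List.ofFn fun i : Fin (2 * n + 1) => x (-(n : ℤ) + i)) := by
    refine congrArg List.ofFn (funext fun i => ?_)
    have hi : (i : ℕ) < 2 * n + 1 := i.isLt
    exact (hxy (-(n : ℤ) + i) (by omega) (by omega)).symm
  show _ ∈ L
  rw [hw]; exact hx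

lemma XL_subset_cwin (L : Set (List B)) (n : ℕ) : XL L ⊆ cwin L n :=
  fun x hx => hx (-(n : ℤ)) (2 * n + 1)

lemma XL_mono {L₁ L₂ : Set (List B)} (h : L₁ ⊆ L₂) : XL L₁ ⊆ XL L₂ :=
  fun x hx m l => h (hx m l)

lemma iInter_cwin_subset_XL {L : Set (List B)}
    (hfac : ∀ w ∈ L, ∀ v : List B, v <:+: w → v ∈ L) :
    (⋂ n, cwin L n) ⊆ XL L := by
  intro x hx m l
  have hN := Set.mem_iInter.1 hx (m.natAbs + l)
  exact hfac _ hN _ (ofFn_infix x (by omega) (by omega))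

lemma cwin_succ_subset {L : Set (List B)}
    (hfac : ∀ w ∈ L, ∀ v : List B, v <:+: w → v ∈ L) (n : ℕ) :
    cwin L (n + 1) ⊆ cwin L n := fun x hx =>
  hfac _ hx _ (ofFn_infix x (by push_cast; omega) (by push_cast; omega))

lemma orb_mem_XL {L : Set (List B)} {x : ℤ → B} (hx : x ∈ XL L) (k : ℕ) :
    orb x k ∈ XL L := by
  intro m l
  have hh := hx (m + k) l
  have hw : (List.ofFn fun i : Fin l => orb x k (m + i))
      = (List.ofFn fun i : Fin l => x (m + k + i)) := by
    refine congrArg List.ofFn (funext fun i => ?_)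
    simp only [orb]; congr 1; ring
  rw [hw]; exact hh

lemma exists_word_of_length {L : Set (List B)} (hlang : IsLanguage L) (hne : L.Nonempty) :
    ∀ l : ℕ, ∃ u ∈ L, u.length = l := by
  intro l
  induction l with
  | zero =>
    obtain ⟨w, hw⟩ := hne
    exact ⟨[], hlang.1 w hw [] List.nil_infix, rfl⟩
  | succ l ih =>
    obtain ⟨u, hu, hul⟩ := ih
    obtain ⟨a, ha⟩ := hlang.2.2 u hu
    exact ⟨u ++ [a], ha, by simp [hul]⟩

lemma cwin_nonempty {L : Set (List B)} (hlang : IsLanguage L) (hne : L.Nonempty) (n : ℕ) :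
    (cwin L n).Nonempty := by
  obtain ⟨u, hu, hul⟩ := exists_word_of_length hlang hne (2 * n + 1)
  have hu0 : u ≠ [] := by intro h; rw [h] at hul; simp at hul
  set b₀ := u.head hu0 with hb₀
  refine ⟨fun k => u.getD (k + n).toNat b₀, ?_⟩
  show (List.ofFn fun i : Fin (2 * n + 1) => u.getD ((-(n : ℤ) + i + n).toNat) b₀) ∈ L
  have hw : (List.ofFn fun i : Fin (2 * n + 1) => u.getD ((-(n : ℤ) + i + n).toNat) b₀) = u := by
    apply List.ext_getElem
    · simp [hul]
    · intro i h1 h2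
      rw [List.getElem_ofFn]
      have hco : ((-(n : ℤ) + (⟨i, by simpa using h1⟩ : Fin (2*n+1)) + n).toNat) = i := by
        simp only [Fin.val_mk]; omega
      rw [hco, List.getD_eq_getElem u b₀ h2]
  rw [hw]; exact hu

lemma XL_nonempty [Finite B] {L : Set (List B)} (hlang : IsLanguage L) (hne : L.Nonempty) :
    (XL L).Nonempty := by
  letI : TopologicalSpace B := ⊥
  haveI : DiscreteTopology B := ⟨rfl⟩
  have h := IsCompact.nonempty_iInter_of_sequence_nonempty_isCompact_isClosed
    (fun n => cwin L n) (fun n => cwin_succ_subset hlang.1 n)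
    (fun n => cwin_nonempty hlang hne n)
    ((isClosed_of_depOn (depOn_cwin L 0)).isCompact)
    (fun n => isClosed_of_depOn (depOn_cwin L n))
  exact h.mono (iInter_cwin_subset_XL hlang.1)

end S8

namespace S8

open MeasureTheory

variable {B : Type*}

lemma isPiSystem_alg : IsPiSystem (Alg B) := fun s hs t ht _ => alg_inter hs ht

lemma mTop_eq_generateFrom [Finite B] :
    mTop B = MeasurableSpace.generateFrom (Alg B) := by
  refine le_antisymm ?_ (MeasurableSpace.generateFrom_le fun E hE => measurableSet_of_alg hE)
  refine iSup_le fun k => ?_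
  intro s hs
  obtain ⟨S, -, rfl⟩ := hs
  refine MeasurableSpace.measurableSet_generateFrom ⟨k.natAbs, fun x y hxy hx => ?_⟩
  rwa [Set.mem_preimage, ← hxy k (by omega) (by omega)]

theorem core [Finite B] {L : Set (List B)} (hlang : IsLanguage L)
    (hur : UniformlyRecurrent L) (hne : L.Nonempty) :
    ∃ μ : @Measure (ℤ → B) (mTop B),
      μ Set.univ = 1 ∧
      (∀ s : Set (ℤ → B), MeasurableSet[mTop B] s → μ (shiftZ ⁻¹' s) = μ s) ∧
      μ (XL L) = 1 ∧
      (∀ w ∈ L, 0 < μ {x : ℤ → B | (List.ofFn fun i : Fin w.length => x ((i : ℕ) : ℤ)) = w}) := by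
  classical
  obtain ⟨x₀, hx₀⟩ := XL_nonempty hlang hne
  letI : TopologicalSpace B := ⊥
  haveI : DiscreteTopology B := ⟨rfl⟩
  set m : Set (ℤ → B) → ℝ≥0∞ := fun E => if E ∈ Alg B then freq x₀ E else ⊤ with hm
  have hm0 : m ∅ = 0 := by rw [hm]; simp only [alg_empty, if_true]; exact freq_empty x₀
  set ν : OuterMeasure (ℤ → B) := OuterMeasure.ofFunction m hm0 with hν
  have key : ∀ E ∈ Alg B, ν E = freq x₀ E := by
    intro E hE
    refine le_antisymm (le_trans (OuterMeasure.ofFunction_le E) (by rw [hm]; simp [hE])) ?_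
    rw [hν, OuterMeasure.ofFunction_apply]
    refine le_iInf fun t => le_iInf fun hcov => ?_
    by_cases hall : ∀ i, t i ∈ Alg B
    · obtain ⟨n, hn⟩ := hE
      have hEc : IsCompact E := (isClosed_of_depOn hn).isCompact
      have hopen : ∀ i, IsOpen (t i) := fun i => by
        obtain ⟨ni, hni⟩ := hall i; exact isOpen_of_depOn hni
      obtain ⟨F, hF⟩ := hEc.elim_finite_subcover t hopen hcov
      calc freq x₀ E ≤ ∑ i ∈ F, freq x₀ (t i) := freq_finset_subadd hF
        _ = ∑ i ∈ F, m (t i) := by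
            refine Finset.sum_congr rfl fun i _ => ?_
            rw [hm]; simp [hall i]
        _ ≤ ∑' i, m (t i) := ENNReal.sum_le_tsum F
    · push_neg at hall; obtain ⟨i, hi⟩ := hall
      have htop : m (t i) = ⊤ := by rw [hm]; simp [hi]
      exact le_top.trans (le_trans (le_of_eq htop.symm) (ENNReal.le_tsum i))
  have hcar : mTop B ≤ ν.caratheodory := by
    rw [mTop_eq_generateFrom]
    refine MeasurableSpace.generateFrom_le fun s hs => ?_
    refine OuterMeasure.ofFunction_caratheodory fun t => ?_
    by_cases ht : t ∈ Alg B
    · rw [hm]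
      simp only [if_pos ht, if_pos (alg_inter ht hs), if_pos (alg_diff ht hs)]
      exact le_of_eq (freq_add_split x₀ t s)
    · rw [hm]; simp [ht]
  set μ : @Measure (ℤ → B) (mTop B) := @OuterMeasure.toMeasure _ (mTop B) ν hcar with hμ
  have happ : ∀ E ∈ Alg B, μ E = freq x₀ E := by
    intro E hE
    rw [hμ, @toMeasure_apply _ (mTop B) ν hcar E (measurableSet_of_alg hE)]
    exact key E hE
  have huniv : μ Set.univ = 1 := by
    rw [happ _ alg_univ]; exact freq_univ x₀
  have hmeas_shift : @Measurable _ _ (mTop B) (mTop B) shiftZ := by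
    refine @measurable_pi_lambda _ _ _ (mTop B) (fun _ => (⊤ : MeasurableSpace B)) shiftZ
      (fun j => ?_)
    exact @measurable_pi_apply ℤ (fun _ => B) (fun _ => ⊤) (j + 1)
  haveI hfin : @IsFiniteMeasure _ (mTop B) μ := by
    refine @IsFiniteMeasure.mk _ (mTop B) μ ?_
    rw [huniv]; exact ENNReal.one_lt_top
  have hinv : ∀ s : Set (ℤ → B), MeasurableSet[mTop B] s → μ (shiftZ ⁻¹' s) = μ s := by
    have hmap : @Measure.map _ _ (mTop B) (mTop B) shiftZ μ = μ := by
      refine @ext_of_generate_finite _ (mTop B) _ _ (Alg B) mTop_eq_generateFrom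
        isPiSystem_alg ?_ ?_ ?_
      · exact @Measure.isFiniteMeasure_map _ _ (mTop B) (mTop B) μ hfin shiftZ
      · intro s hs
        rw [@Measure.map_apply _ _ (mTop B) (mTop B) μ shiftZ hmeas_shift s
          (measurableSet_of_alg hs)]
        rw [happ _ (alg_preimage_shift hs), happ _ hs]
        exact freq_preimage_shift x₀ s
      · rw [@Measure.map_apply _ _ (mTop B) (mTop B) μ shiftZ hmeas_shift _
          MeasurableSet.univ, Set.preimage_univ]
    intro s hs
    conv_rhs => rw [← hmap]
    rw [@Measure.map_apply _ _ (mTop B) (mTop B) μ shiftZ hmeas_shift s hs]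
  have hEn : ∀ n : ℕ, μ (cwin L n) = 1 := by
    intro n
    rw [happ _ ⟨n, depOn_cwin L n⟩]
    exact freq_of_forall_mem (fun k => XL_subset_cwin L n (orb_mem_XL hx₀ k))
  have hXL1 : μ (XL L) = 1 := by
    have hcompl : μ ((XL L)ᶜ) = 0 := by
      have hsub : (XL L)ᶜ ⊆ ⋃ n, (cwin L n)ᶜ := by
        rw [← Set.compl_iInter]
        exact Set.compl_subset_compl.2 (iInter_cwin_subset_XL hlang.1)
      refine le_antisymm ?_ zero_le
      calc μ ((XL L)ᶜ) ≤ μ (⋃ n, (cwin L n)ᶜ) := measure_mono hsub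
        _ ≤ ∑' n, μ ((cwin L n)ᶜ) := measure_iUnion_le _
        _ = 0 := by
          refine ENNReal.tsum_eq_zero.2 fun n => ?_
          rw [measure_compl (measurableSet_of_alg ⟨n, depOn_cwin L n⟩)
            (by rw [hEn n]; exact ENNReal.one_ne_top), hEn n, huniv, tsub_self]
    refine le_antisymm (by rw [← huniv]; exact measure_mono (Set.subset_univ _)) ?_
    have h2 : μ Set.univ ≤ μ (XL L) + μ ((XL L)ᶜ) := by
      rw [← Set.union_compl_self (XL L)]
      exact measure_union_le _ _
    rwa [hcompl, add_zero, huniv] at h2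
  refine ⟨μ, huniv, hinv, hXL1, ?_⟩
  intro w hw
  by_cases hw0 : w = []
  · subst hw0
    have hset : {x : ℤ → B | (List.ofFn fun i : Fin (List.length ([] : List B)) =>
        x ((i : ℕ) : ℤ)) = ([] : List B)} = Set.univ := by
      ext x
      simp only [Set.mem_setOf_eq, Set.mem_univ, iff_true]
      exact List.eq_nil_of_length_eq_zero (by simp)
    rw [hset, huniv]; norm_num
  · obtain ⟨n, hn⟩ := hur w hw
    set C := {x : ℤ → B | (List.ofFn fun i : Fin w.length => x ((i : ℕ) : ℤ)) = w} with hC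
    have hCdep : DepOn C w.length := by
      intro x y hxy hx
      have : (List.ofFn fun i : Fin w.length => y ((i : ℕ) : ℤ))
          = (List.ofFn fun i : Fin w.length => x ((i : ℕ) : ℤ)) := by
        refine congrArg List.ofFn (funext fun i => ?_)
        have hi : (i : ℕ) < w.length := i.isLt
        exact (hxy ((i : ℕ) : ℤ) (by omega) (by omega)).symm
      show _ ∈ C
      rw [hC, Set.mem_setOf_eq, this]
      exact hx
    have hDdep : ∀ k : ℕ, DepOn ((fun x => orb x k) ⁻¹' C) (w.length + k) := by
      intro k x y hxy hx
      rw [Set.mem_preimage] at hx ⊢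
      have : (List.ofFn fun i : Fin w.length => orb y k ((i : ℕ) : ℤ))
          = (List.ofFn fun i : Fin w.length => orb x k ((i : ℕ) : ℤ)) := by
        refine congrArg List.ofFn (funext fun i => ?_)
        have hi : (i : ℕ) < w.length := i.isLt
        simp only [orb]
        exact (hxy (((i : ℕ) : ℤ) + k) (by omega) (by omega)).symm
      rw [hC, Set.mem_setOf_eq] at hx ⊢
      rw [this]
      exact hx
    have hDval : ∀ k : ℕ, μ ((fun x => orb x k) ⁻¹' C) = μ C := by
      intro k
      induction k with
      | zero =>
        have : (fun x : ℤ → B => orb x 0) ⁻¹' C = C := by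
          rw [show (fun x : ℤ → B => orb x 0) = id from funext orb_zero, Set.preimage_id]
        rw [this]
      | succ k ih =>
        have hstep : (fun x : ℤ → B => orb x (k + 1)) ⁻¹' C
            = shiftZ ⁻¹' ((fun x : ℤ → B => orb x k) ⁻¹' C) := by
          ext x
          simp only [Set.mem_preimage, orb_shift]
        rw [hstep, hinv _ (measurableSet_of_depOn (hDdep k)), ih]
    have hwlen : 0 < w.length := List.length_pos_iff.2 hw0
    have hcover : XL L ⊆ ⋃ k ∈ Finset.range n, (fun x => orb x k) ⁻¹' C := by
      intro x hx
      set u := (List.ofFn fun i : Fin n => x ((0 : ℤ) + (i : ℕ))) with hu'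
      have hu : u ∈ L := hx 0 n
      obtain ⟨s, t, hst⟩ := hn _ hu (by rw [hu']; simp)
      have hlen : s.length + w.length + t.length = n := by
        have h := congrArg List.length hst
        rw [hu'] at h
        simp only [List.length_append, List.length_ofFn] at h
        omega
      have hw' : (u.drop s.length).take w.length = w := by
        rw [← hst, List.append_assoc, List.drop_left, List.take_left]
      refine Set.mem_biUnion (show s.length ∈ Finset.range n from Finset.mem_range.2 (by omega)) ?_
      rw [Set.mem_preimage, hC, Set.mem_setOf_eq, ← hw']
      have hul : u.length = n := by rw [hu']; exact List.length_ofFn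
      apply List.ext_getElem
      · simp only [List.length_ofFn, List.length_take, List.length_drop, hul]
        try omega
      · intro i h1 h2
        have h3 : s.length + i < u.length := by
          simp only [List.length_take, List.length_drop] at h2; omega
        rw [List.getElem_ofFn, List.getElem_take, List.getElem_drop]
        have h4 : u[s.length + i]'h3 = x (0 + ((s.length + i : ℕ) : ℤ)) := by
          simp only [hu']
          rw [List.getElem_ofFn]
        rw [h4]
        simp only [orb, Fin.val_mk]
        congr 1
        push_cast
        omega
    refine pos_iff_ne_zero.2 fun h0 => ?_
    have hcontr : (1 : ℝ≥0∞) ≤ 0 := by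
      calc (1 : ℝ≥0∞) = μ (XL L) := hXL1.symm
        _ ≤ μ (⋃ k ∈ Finset.range n, (fun x => orb x k) ⁻¹' C) := measure_mono hcover
        _ ≤ ∑ k ∈ Finset.range n, μ ((fun x => orb x k) ⁻¹' C) :=
            measure_biUnion_finset_le _ _
        _ = 0 := by
          refine Finset.sum_eq_zero fun k _ => ?_
          rw [hDval k, h0]
    simp at hcontr

end S8

namespace S8

open MeasureTheory

lemma pi_le_mTop {A : Type*} [m : MeasurableSpace A] :
    (MeasurableSpace.pi : MeasurableSpace (ℤ → A)) ≤ mTop A := by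
  refine iSup_le fun k => ?_
  exact le_trans (MeasurableSpace.comap_mono le_top)
    (le_iSup (fun a : ℤ => MeasurableSpace.comap (fun b : ℤ → A => b a) (⊤ : MeasurableSpace A)) k)

lemma hcsum : ∑' n : ℕ, (2⁻¹ : ℝ≥0∞) ^ (n + 1) = 1 := by
  have h1 : ∀ n : ℕ, (2⁻¹ : ℝ≥0∞) ^ (n + 1) = 2⁻¹ * 2⁻¹ ^ n := fun n => by ring
  rw [tsum_congr h1, ENNReal.tsum_mul_left, ENNReal.tsum_geometric, ENNReal.one_sub_inv_two]
  exact ENNReal.mul_inv_cancel (by norm_num) (by norm_num)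

end S8


end S8Aux

open S8
open scoped ENNReal

/-- a finite or countable union of uniformly recurrent languages
satisfies the measure condition. -/
theorem stmt8 {A : Type*} [Fintype A] [MeasurableSpace A] {ι : Type*} [Countable ι]
    (Ls : ι → Set (List A))
    (hLs : ∀ i, IsLanguage (Ls i) ∧ UniformlyRecurrent (Ls i))
    (L : Set (List A)) (hL : L = ⋃ i, Ls i) (hlang : IsLanguage L)
    (hne : L.Nonempty) :
    ∃ μ : Measure (ℤ → A), IsProbabilityMeasure μ ∧
      (∀ s : Set (ℤ → A), MeasurableSet s → μ (shiftZ ⁻¹' s) = μ s) ∧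
      μ (XL L) = 1 ∧
      ∀ w ∈ L,
        0 < μ {x : ℤ → A | (List.ofFn fun i : Fin w.length => x ((i : ℕ) : ℤ)) = w} := by
  classical
  obtain ⟨w₀, hw₀⟩ := hne
  have hw₀' : w₀ ∈ ⋃ i, Ls i := hL ▸ hw₀
  obtain ⟨i₀, hi₀⟩ := Set.mem_iUnion.1 hw₀'
  haveI : Nonempty ι := ⟨i₀⟩
  have hsub : ∀ i, Ls i ⊆ L := fun i => by rw [hL]; exact Set.subset_iUnion Ls i
  have H : ∀ i : ι, ∃ μ : @Measure (ℤ → A) (mTop A),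
      μ Set.univ = 1 ∧
      (∀ s : Set (ℤ → A), MeasurableSet[mTop A] s → μ (shiftZ ⁻¹' s) = μ s) ∧
      μ (XL L) = 1 ∧
      (∀ w ∈ Ls i, 0 < μ {x : ℤ → A |
        (List.ofFn fun i : Fin w.length => x ((i : ℕ) : ℤ)) = w}) := by
    intro i
    by_cases hni : (Ls i).Nonempty
    · obtain ⟨μ, h1, h2, h3, h4⟩ := core (hLs i).1 (hLs i).2 hni
      refine ⟨μ, h1, h2, ?_, h4⟩
      refine le_antisymm (by rw [← h1]; exact measure_mono (Set.subset_univ _)) ?_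
      rw [← h3]; exact measure_mono (XL_mono (hsub i))
    · obtain ⟨μ, h1, h2, h3, h4⟩ := core (hLs i₀).1 (hLs i₀).2 ⟨w₀, hi₀⟩
      refine ⟨μ, h1, h2, ?_, fun w hw => absurd ⟨w, hw⟩ hni⟩
      refine le_antisymm (by rw [← h1]; exact measure_mono (Set.subset_univ _)) ?_
      rw [← h3]; exact measure_mono (XL_mono (hsub i₀))
  choose ν hν1 hν2 hν3 hν4 using H
  obtain ⟨e, he⟩ := exists_surjective_nat ι
  set c : ℕ → ℝ≥0∞ := fun n => 2⁻¹ ^ (n + 1) with hc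
  set μ₀ : @Measure (ℤ → A) (mTop A) :=
    @Measure.sum (ℤ → A) ℕ (mTop A) (fun n => c n • ν (e n)) with hμ₀
  have hμ₀app : ∀ s : Set (ℤ → A), MeasurableSet[mTop A] s →
      μ₀ s = ∑' n : ℕ, c n * ν (e n) s := by
    intro s hs
    rw [hμ₀, Measure.sum_apply _ hs]
    exact tsum_congr fun n => by rw [Measure.smul_apply, smul_eq_mul]
  have hμ₀univ : μ₀ Set.univ = 1 := by
    rw [hμ₀app _ MeasurableSet.univ]
    rw [tsum_congr (fun n => by rw [hν1 (e n), mul_one])]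
    exact hcsum
  have hmeas_shift_top : @Measurable _ _ (mTop A) (mTop A) shiftZ := by
    refine @measurable_pi_lambda _ _ _ (mTop A) (fun _ => (⊤ : MeasurableSpace A)) shiftZ
      (fun j => ?_)
    exact @measurable_pi_apply ℤ (fun _ => A) (fun _ => ⊤) (j + 1)
  have hμ₀inv : ∀ s : Set (ℤ → A), MeasurableSet[mTop A] s →
      μ₀ (shiftZ ⁻¹' s) = μ₀ s := by
    intro s hs
    rw [hμ₀app _ (hmeas_shift_top hs), hμ₀app _ hs]
    exact tsum_congr fun n => by rw [hν2 (e n) s hs]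
  have hμ₀XL : μ₀ (XL L) = 1 := by
    have hEn : ∀ n : ℕ, μ₀ (cwin L n) = 1 := by
      intro n
      rw [hμ₀app _ (measurableSet_of_alg ⟨n, depOn_cwin L n⟩)]
      have hval : ∀ i, ν i (cwin L n) = 1 := fun i =>
        le_antisymm (by rw [← hν1 i]; exact measure_mono (Set.subset_univ _))
          (by rw [← hν3 i]; exact measure_mono (XL_subset_cwin L n))
      rw [tsum_congr (fun k => by rw [hval (e k), mul_one])]
      exact hcsum
    have hcompl : μ₀ ((XL L)ᶜ) = 0 := by
      have hsub2 : (XL L)ᶜ ⊆ ⋃ n, (cwin L n)ᶜ := by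
        rw [← Set.compl_iInter]
        exact Set.compl_subset_compl.2 (iInter_cwin_subset_XL hlang.1)
      refine le_antisymm ?_ zero_le
      calc μ₀ ((XL L)ᶜ) ≤ μ₀ (⋃ n, (cwin L n)ᶜ) := measure_mono hsub2
        _ ≤ ∑' n, μ₀ ((cwin L n)ᶜ) := measure_iUnion_le _
        _ = 0 := by
          refine ENNReal.tsum_eq_zero.2 fun n => ?_
          rw [measure_compl (measurableSet_of_alg ⟨n, depOn_cwin L n⟩)
            (by rw [hEn n]; exact ENNReal.one_ne_top), hEn n, hμ₀univ, tsub_self]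
    refine le_antisymm (by rw [← hμ₀univ]; exact measure_mono (Set.subset_univ _)) ?_
    have h2 : μ₀ Set.univ ≤ μ₀ (XL L) + μ₀ ((XL L)ᶜ) := by
      rw [← Set.union_compl_self (XL L)]
      exact measure_union_le _ _
    rwa [hcompl, add_zero, hμ₀univ] at h2
  have hμ₀pos : ∀ w ∈ L, 0 < μ₀ {x : ℤ → A |
      (List.ofFn fun i : Fin w.length => x ((i : ℕ) : ℤ)) = w} := by
    intro w hw
    have hw' : w ∈ ⋃ i, Ls i := hL ▸ hw
    obtain ⟨i, hi⟩ := Set.mem_iUnion.1 hw'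
    obtain ⟨n, hn⟩ := he i
    set Cw := {x : ℤ → A | (List.ofFn fun i : Fin w.length => x ((i : ℕ) : ℤ)) = w} with hCw
    have hCmeas : MeasurableSet[mTop A] Cw := by
      refine measurableSet_of_alg ⟨w.length, fun x y hxy hx => ?_⟩
      have hxy' : (List.ofFn fun i : Fin w.length => y ((i : ℕ) : ℤ))
          = (List.ofFn fun i : Fin w.length => x ((i : ℕ) : ℤ)) := by
        refine congrArg List.ofFn (funext fun j => ?_)
        have hj : (j : ℕ) < w.length := j.isLt
        exact (hxy ((j : ℕ) : ℤ) (by omega) (by omega)).symm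
      rw [hCw, Set.mem_setOf_eq] at hx ⊢
      rw [hxy']; exact hx
    have hterm : c n * ν (e n) Cw ≤ μ₀ Cw := by
      rw [hμ₀app _ hCmeas]
      exact ENNReal.le_tsum n
    refine lt_of_lt_of_le ?_ hterm
    refine ENNReal.mul_pos ?_ ?_
    · exact (pow_ne_zero _ (by norm_num))
    · rw [hn]
      exact (hν4 i w hi).ne'
  have hle : (MeasurableSpace.pi : MeasurableSpace (ℤ → A)) ≤ mTop A := pi_le_mTop
  have hmeas_shift : Measurable (shiftZ (A := A)) :=
    measurable_pi_lambda shiftZ (fun j => measurable_pi_apply (j + 1))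
  refine ⟨μ₀.trim hle, ?_, ?_, ?_, ?_⟩
  · exact ⟨by rw [trim_measurableSet_eq hle MeasurableSet.univ, hμ₀univ]⟩
  · intro s hs
    rw [trim_measurableSet_eq hle (hs.preimage hmeas_shift), trim_measurableSet_eq hle hs]
    exact hμ₀inv s (hle s hs)
  · refine le_antisymm ?_ ?_
    · calc (μ₀.trim hle) (XL L) ≤ (μ₀.trim hle) Set.univ := measure_mono (Set.subset_univ _)
        _ = 1 := by rw [trim_measurableSet_eq hle MeasurableSet.univ, hμ₀univ]
    · rw [← hμ₀XL]; exact le_trim hle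
  · intro w hw
    exact lt_of_lt_of_le (hμ₀pos w hw) (le_trim hle)
end

section
/- Suppose a language L has no strong bispecial word. If a right-infinite sequence all of whose factors lie in L is right recurrent (every factor occurs at infinitely many positions), then the set of its factors is a uniformly recurrent language. -/
open List Set

variable {A : Type*}

variable {F : Finset A}

/-- A right-infinite sequence all of whose factors lie in `L`. -/
def RInf (L : Set (List A)) (x : ℕ → A) : Prop :=
  ∀ m n : ℕ, (List.ofFn fun i : Fin n => x (m + (i : ℕ))) ∈ L

/-- The set of factors of a right-infinite sequence. -/
def factorsOfR (x : ℕ → A) : Set (List A) :=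
  {w | ∃ m : ℕ, (List.ofFn fun i : Fin w.length => x (m + (i : ℕ))) = w}

/-- Right recurrence: every factor occurs at arbitrarily large positions. -/
def RightRecurrentSeq (x : ℕ → A) : Prop :=
  ∀ w ∈ factorsOfR x, ∀ N : ℕ, ∃ m : ℕ, N ≤ m ∧
    (List.ofFn fun i : Fin w.length => x (m + (i : ℕ))) = w



/-! ### Auxiliary development -/

def win (x : ℕ → A) (m n : ℕ) : List A := List.ofFn fun i : Fin n => x (m + (i : ℕ))

@[simp] lemma win_length (x : ℕ → A) (m n : ℕ) : (win x m n).length = n := by simp [win]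

lemma win_succ (x : ℕ → A) (m n : ℕ) :
    win x m (n + 1) = win x m n ++ [x (m + n)] := by
  rw [win, List.ofFn_succ']
  simp [win, List.concat_eq_append]

lemma win_add (x : ℕ → A) (m a b : ℕ) :
    win x m (a + b) = win x m a ++ win x (m + a) b := by
  induction b with
  | zero => simp [win]
  | succ b ih =>
      rw [show a + (b+1) = (a+b)+1 by ring, win_succ, ih, win_succ,
        List.append_assoc, show m + a + b = m + (a + b) by ring]

lemma win_one (x : ℕ → A) (m : ℕ) : win x m 1 = [x m] := by
  simp [win, List.ofFn_succ]

lemma win_cons (x : ℕ → A) (m n : ℕ) :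
    win x m (n + 1) = x m :: win x (m + 1) n := by
  simp only [win, List.ofFn_succ, Fin.val_zero, Nat.add_zero]
  have h2 : (fun i : Fin n => x (m + (i.succ : ℕ))) = fun i : Fin n => x (m + 1 + (i : ℕ)) := by
    funext i
    congr 1
    simp [Fin.val_succ]
    omega
  rw [h2]

lemma mem_factorsOfR {x : ℕ → A} {w : List A} :
    w ∈ factorsOfR x ↔ ∃ m, win x m w.length = w := Iff.rfl

lemma win_mem_factorsOfR (x : ℕ → A) (m n : ℕ) : win x m n ∈ factorsOfR x :=
  ⟨m, by rw [win_length]; rfl⟩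

lemma win_mem_L {L : Set (List A)} {x : ℕ → A} (hx : RInf L x) (m n : ℕ) :
    win x m n ∈ L := hx m n

lemma factorsOfR_subset {L : Set (List A)} {x : ℕ → A} (hx : RInf L x) :
    factorsOfR x ⊆ L := by
  rintro w ⟨m, hm⟩; rw [← hm]; exact hx m _

lemma win_extract {x : ℕ → A} {m N : ℕ} {s u t : List A}
    (h : win x m N = s ++ (u ++ t)) : win x (m + s.length) u.length = u := by
  have hN : N = s.length + (u.length + t.length) := by
    have := congrArg List.length h; simpa using this
  subst hN
  rw [win_add, win_add] at h
  obtain ⟨-, h2⟩ := List.append_inj h (by simp)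
  exact (List.append_inj h2 (by simp)).1

lemma factorsOfR_infix {x : ℕ → A} {w v : List A}
    (hw : w ∈ factorsOfR x) (hv : v <:+: w) : v ∈ factorsOfR x := by
  obtain ⟨s, t, hst⟩ := hv
  subst hst
  obtain ⟨m, hm⟩ := hw
  have hm' : win x m (s ++ v ++ t).length = s ++ (v ++ t) := by
    rw [← List.append_assoc]; exact hm
  exact ⟨m + s.length, win_extract hm'⟩

lemma factorsOfR_isLanguage {x : ℕ → A} (hrr : RightRecurrentSeq x) :
    IsLanguage (factorsOfR x) := by
  refine ⟨fun w hw v hv => factorsOfR_infix hw hv, ?_, ?_⟩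
  · intro w hw
    obtain ⟨m, hm, hm2⟩ := hrr w hw 1
    refine ⟨x (m - 1), ⟨m - 1, ?_⟩⟩
    show win x (m-1) ((x (m-1) :: w).length) = _
    rw [List.length_cons, win_cons, show m - 1 + 1 = m by omega,
      show win x m w.length = w from hm2]
  · intro w hw
    obtain ⟨m, hm⟩ := hw
    refine ⟨x (m + w.length), ⟨m, ?_⟩⟩
    show win x m ((w ++ [x (m + w.length)]).length) = _
    rw [List.length_append, List.length_singleton, win_succ,
      show win x m w.length = w from hm]

section counting
set_option linter.unusedSectionVars false
variable [Fintype A] [DecidableEq A] (L : Set (List A))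

noncomputable def arrF (w : List A) : Finset A := (Set.toFinite (arrSet L w)).toFinset
noncomputable def depF (w : List A) : Finset A := (Set.toFinite (depSet L w)).toFinset
noncomputable def mF (w : List A) : Finset (A × A) :=
  (Set.toFinite {p : A × A | p.1 :: (w ++ [p.2]) ∈ L}).toFinset
noncomputable def Lfin (n : ℕ) : Finset (List A) :=
  Set.Finite.toFinset ((List.finite_length_eq A n).subset
    (fun w (hw : w ∈ L ∧ w.length = n) => hw.2))

variable {L}

@[simp] lemma mem_arrF {w : List A} {a : A} : a ∈ arrF L w ↔ a :: w ∈ L := by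
  simp [arrF, arrSet]

@[simp] lemma mem_depF {w : List A} {a : A} : a ∈ depF L w ↔ w ++ [a] ∈ L := by
  simp [depF, depSet]

@[simp] lemma mem_mF {w : List A} {q : A × A} : q ∈ mF L w ↔ q.1 :: (w ++ [q.2]) ∈ L := by
  simp [mF]

@[simp] lemma mem_Lfin {n : ℕ} {w : List A} : w ∈ Lfin L n ↔ w ∈ L ∧ w.length = n := by
  rw [Lfin]; exact Set.Finite.mem_toFinset ..

lemma arr_ncard (w : List A) : (arrSet L w).ncard = (arrF L w).card :=
  Set.ncard_eq_toFinset_card _ _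

lemma dep_ncard (w : List A) : (depSet L w).ncard = (depF L w).card :=
  Set.ncard_eq_toFinset_card _ _

variable (hL : IsLanguage L)
include hL

lemma arr_pos {w : List A} (hw : w ∈ L) : 1 ≤ (arrF L w).card := by
  obtain ⟨a, ha⟩ := hL.2.1 w hw
  exact Finset.card_pos.mpr ⟨a, by simpa using ha⟩

lemma dep_pos {w : List A} (hw : w ∈ L) : 1 ≤ (depF L w).card := by
  obtain ⟨a, ha⟩ := hL.2.2 w hw
  exact Finset.card_pos.mpr ⟨a, by simpa using ha⟩

lemma mF_fst {w : List A} {q : A × A} (hq : q ∈ mF L w) : q.1 ∈ arrF L w := by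
  rw [mem_mF] at hq
  rw [mem_arrF]
  exact hL.1 _ hq _ (List.IsPrefix.isInfix ⟨[q.2], by simp⟩)

lemma mF_snd {w : List A} {q : A × A} (hq : q ∈ mF L w) : q.2 ∈ depF L w := by
  rw [mem_mF] at hq
  rw [mem_depF]
  exact hL.1 _ hq _ (List.IsSuffix.isInfix ⟨[q.1], by simp⟩)

/-- sum over the fiber of `dropLast` over `w`. -/
lemma fiber_sum_dropLast {n : ℕ} {w : List A} (hw : w ∈ Lfin L n) (f : List A → ℕ) :
    ∑ u ∈ (Lfin L (n+1)).filter (fun u => u.dropLast = w), f u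
      = ∑ b ∈ depF L w, f (w ++ [b]) := by
  classical
  rw [mem_Lfin] at hw
  refine (Finset.sum_bij (fun b _ => w ++ [b]) ?_ ?_ ?_ ?_).symm
  · intro b hb
    rw [mem_depF] at hb
    refine Finset.mem_filter.mpr ⟨mem_Lfin.mpr ⟨hb, by simp [hw.2]⟩, ?_⟩
    simp
  · intro b _ b' _ h
    simpa using h
  · intro u hu
    rw [Finset.mem_filter, mem_Lfin] at hu
    have hne : u ≠ [] := by
      intro h; rw [h] at hu; simp at hu
    refine ⟨u.getLast hne, ?_, ?_⟩
    · rw [mem_depF, ← hu.2, List.dropLast_append_getLast hne]; exact hu.1.1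
    · have h2 := List.dropLast_append_getLast hne; rw [hu.2] at h2; exact h2
  · intros; rfl

lemma fiber_sum_tail {n : ℕ} {w : List A} (hw : w ∈ Lfin L n) (f : List A → ℕ) :
    ∑ u ∈ (Lfin L (n+1)).filter (fun u => u.tail = w), f u
      = ∑ a ∈ arrF L w, f (a :: w) := by
  classical
  rw [mem_Lfin] at hw
  refine (Finset.sum_bij (fun a _ => a :: w) ?_ ?_ ?_ ?_).symm
  · intro a ha
    rw [mem_arrF] at ha
    exact Finset.mem_filter.mpr ⟨mem_Lfin.mpr ⟨ha, by simp [hw.2]⟩, by simp⟩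
  · intro a _ a' _ h
    simpa using h
  · intro u hu
    rw [Finset.mem_filter, mem_Lfin] at hu
    have hne : u ≠ [] := by
      intro h; rw [h] at hu; simp at hu
    refine ⟨u.head hne, ?_, ?_⟩
    · rw [mem_arrF, ← hu.2, List.cons_head_tail hne]; exact hu.1.1
    · have h2 := List.cons_head_tail hne; rw [hu.2] at h2; exact h2
  · intros; rfl

lemma dropLast_mapsto {n : ℕ} {u : List A} (hu : u ∈ Lfin L (n+1)) :
    u.dropLast ∈ Lfin L n := by
  rw [mem_Lfin] at hu ⊢
  have hne : u ≠ [] := by intro h; rw [h] at hu; simp at hu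
  constructor
  · refine hL.1 _ hu.1 _ (List.IsPrefix.isInfix ⟨[u.getLast hne], ?_⟩)
    exact List.dropLast_append_getLast hne
  · rw [List.length_dropLast, hu.2]; omega

lemma tail_mapsto {n : ℕ} {u : List A} (hu : u ∈ Lfin L (n+1)) :
    u.tail ∈ Lfin L n := by
  rw [mem_Lfin] at hu ⊢
  exact ⟨hL.1 _ hu.1 _ (List.IsSuffix.isInfix (List.tail_suffix u)),
    by rw [List.length_tail, hu.2]; omega⟩

lemma I1 (n : ℕ) : (Lfin L (n+1)).card = ∑ w ∈ Lfin L n, (depF L w).card := by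
  classical
  rw [Finset.card_eq_sum_card_fiberwise (fun u hu => dropLast_mapsto hL hu)]
  refine Finset.sum_congr rfl fun w hw => ?_
  simpa using fiber_sum_dropLast hL hw (fun _ => 1)

lemma I2 (n : ℕ) : (Lfin L (n+1)).card = ∑ w ∈ Lfin L n, (arrF L w).card := by
  classical
  rw [Finset.card_eq_sum_card_fiberwise (fun u hu => tail_mapsto hL hu)]
  refine Finset.sum_congr rfl fun w hw => ?_
  simpa using fiber_sum_tail hL hw (fun _ => 1)

lemma I3a {w : List A} : (mF L w).card = ∑ b ∈ depF L w, (arrF L (w ++ [b])).card := by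
  classical
  rw [Finset.card_eq_sum_card_fiberwise (f := Prod.snd) (fun q hq => mF_snd hL hq)]
  refine Finset.sum_congr rfl fun b hb => ?_
  refine (Finset.card_bij (fun a _ => (a, b)) ?_ ?_ ?_).symm
  · intro a ha
    rw [mem_arrF] at ha
    exact Finset.mem_filter.mpr ⟨by simpa using ha, rfl⟩
  · intro a _ a' _ h
    simpa using h
  · intro q hq
    rw [Finset.mem_filter] at hq
    refine ⟨q.1, ?_, ?_⟩
    · have := hq.1; rw [mem_mF] at this; rw [mem_arrF, ← hq.2]; exact this
    · obtain ⟨q1, q2⟩ := q; simp only at hq ⊢; rw [hq.2]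
  
lemma I3 (n : ℕ) : ∑ w ∈ Lfin L n, (mF L w).card = (Lfin L (n+2)).card := by
  classical
  rw [I2 hL (n+1), ← Finset.sum_fiberwise_of_maps_to
    (fun u hu => dropLast_mapsto hL (n := n) hu) (fun u => (arrF L u).card)]
  refine Finset.sum_congr rfl fun w hw => ?_
  rw [I3a hL, fiber_sum_dropLast hL hw (fun u => (arrF L u).card)]

end counting

section structure1
set_option linter.unusedSectionVars false
variable [Fintype A] [DecidableEq A] {L : Set (List A)}
variable (hL : IsLanguage L)
include hL

lemma m_le {w : List A} (hw : w ∈ L) (hns : ∀ w : List A, ¬ StrongBispecial L w) :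
    (mF L w).card + 1 ≤ (arrF L w).card + (depF L w).card := by
  classical
  have ha1 := arr_pos hL hw
  have hd1 := dep_pos hL hw
  rcases le_or_gt (arrF L w).card 1 with ha | ha
  · have : (mF L w).card ≤ (depF L w).card := by
      apply Finset.card_le_card_of_injOn Prod.snd (fun q hq => mF_snd hL hq)
      intro q hq q' hq' h2
      have h1 : q.1 = q'.1 := Finset.card_le_one.mp ha _ (mF_fst hL hq) _ (mF_fst hL hq')
      exact Prod.ext h1 h2
    omega
  rcases le_or_gt (depF L w).card 1 with hd | hd
  · have : (mF L w).card ≤ (arrF L w).card := by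
      apply Finset.card_le_card_of_injOn Prod.fst (fun q hq => mF_fst hL hq)
      intro q hq q' hq' h1
      have h2 : q.2 = q'.2 := Finset.card_le_one.mp hd _ (mF_snd hL hq) _ (mF_snd hL hq')
      exact Prod.ext h1 h2
    omega
  · have hnsb := hns w
    rw [StrongBispecial] at hnsb
    push_neg at hnsb
    have hb : Bispecial L w := by
      constructor
      · rw [arr_ncard]; exact ha
      · rw [dep_ncard]; exact hd
    have := hnsb hb
    rw [extCount, arr_ncard, dep_ncard] at this
    have hm : (mF L w).card = {p : A × A | p.1 :: (w ++ [p.2]) ∈ L}.ncard :=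
      (Set.ncard_eq_toFinset_card _ _).symm
    omega

variable (hns : ∀ w : List A, ¬ StrongBispecial L w)
include hns

lemma main_identity (n : ℕ) :
    (Lfin L n).card + (Lfin L (n+2)).card
      + (∑ w ∈ Lfin L n, ((arrF L w).card + (depF L w).card - 1 - (mF L w).card))
      = 2 * (Lfin L (n+1)).card := by
  classical
  have key : ∀ w ∈ Lfin L n,
      (arrF L w).card + (depF L w).card
        = 1 + (mF L w).card + ((arrF L w).card + (depF L w).card - 1 - (mF L w).card) := by
    intro w hw
    rw [mem_Lfin] at hw
    have := m_le hL hw.1 hns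
    have := arr_pos hL hw.1
    omega
  have h1 : ∑ w ∈ Lfin L n, ((arrF L w).card + (depF L w).card)
      = ∑ w ∈ Lfin L n, (1 + (mF L w).card
          + ((arrF L w).card + (depF L w).card - 1 - (mF L w).card)) :=
    Finset.sum_congr rfl key
  rw [Finset.sum_add_distrib] at h1
  rw [Finset.sum_add_distrib] at h1
  rw [Finset.sum_add_distrib] at h1
  simp only [Finset.sum_const, smul_eq_mul, mul_one] at h1
  rw [← I2 hL n, ← I1 hL n, I3 hL n] at h1
  omega

omit hns in
lemma pC_mono (n : ℕ) : (Lfin L n).card ≤ (Lfin L (n+1)).card := by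
  rw [I1 hL n]
  calc (Lfin L n).card = ∑ _w ∈ Lfin L n, 1 := by simp
  _ ≤ _ := Finset.sum_le_sum (fun w hw => dep_pos hL (mem_Lfin.mp hw).1)

lemma s_antitone (n : ℕ) :
    (Lfin L (n+2)).card - (Lfin L (n+1)).card ≤ (Lfin L (n+1)).card - (Lfin L n).card := by
  have := main_identity hL hns n
  have := pC_mono hL n
  have := pC_mono hL (n+1)
  omega

/-- there is a threshold beyond which every word of `L` is neutral. -/
lemma exists_neutral_threshold : ∃ n₀ : ℕ, ∀ w ∈ L, n₀ ≤ w.length →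
    (mF L w).card + 1 = (arrF L w).card + (depF L w).card := by
  classical
  set s : ℕ → ℕ := fun n => (Lfin L (n+1)).card - (Lfin L n).card with hs
  have hanti : ∀ i j, i ≤ j → s j ≤ s i := by
    intro i j hij
    induction hij with
    | refl => exact le_refl _
    | step h ih => exact le_trans (s_antitone hL hns _) ih
  have hne : (Set.range s).Nonempty := ⟨s 0, ⟨0, rfl⟩⟩
  obtain ⟨n₀, hn₀⟩ := Nat.sInf_mem hne
  refine ⟨n₀, ?_⟩
  intro w hwL hwlen
  have hsn : s w.length = s n₀ := by
    have h1 : s w.length ≤ s n₀ := hanti n₀ w.length hwlen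
    have h2 : s n₀ ≤ s w.length := by rw [hn₀]; exact Nat.sInf_le ⟨w.length, rfl⟩
    omega
  have hsn1 : s (w.length + 1) = s n₀ := by
    have h1 : s (w.length + 1) ≤ s n₀ := hanti n₀ _ (by omega)
    have h2 : s n₀ ≤ s (w.length + 1) := by rw [hn₀]; exact Nat.sInf_le ⟨_, rfl⟩
    omega
  have hid := main_identity hL hns w.length
  have hm1 := pC_mono hL w.length
  have hm2 : (Lfin L (w.length+1)).card ≤ (Lfin L (w.length+2)).card :=
    pC_mono hL (w.length + 1)
  have hD : ∑ u ∈ Lfin L w.length,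
      ((arrF L u).card + (depF L u).card - 1 - (mF L u).card) = 0 := by
    have e1 : s w.length = (Lfin L (w.length+1)).card - (Lfin L w.length).card := rfl
    have e2 : s (w.length+1) = (Lfin L (w.length+2)).card - (Lfin L (w.length+1)).card := rfl
    have hEq := hsn.trans hsn1.symm
    rw [e1, e2] at hEq
    have hid' : (Lfin L w.length).card + (Lfin L (w.length+2)).card
      + (∑ u ∈ Lfin L w.length,
          ((arrF L u).card + (depF L u).card - 1 - (mF L u).card))
      = 2 * (Lfin L (w.length+1)).card := hid
    omega
  have hw0 : (arrF L w).card + (depF L w).card - 1 - (mF L w).card = 0 := by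
    have := (Finset.sum_eq_zero_iff).mp hD w (mem_Lfin.mpr ⟨hwL, rfl⟩)
    exact this
  have := m_le hL hwL hns
  have := arr_pos hL hwL
  omega

omit hns in
lemma m_eq_sum {w : List A} : (mF L w).card = ∑ b ∈ depF L w, (arrF L (w ++ [b])).card :=
  I3a hL

omit hns in
lemma child_exists {n₀ : ℕ}
    (hneu : ∀ w ∈ L, n₀ ≤ w.length → (mF L w).card + 1 = (arrF L w).card + (depF L w).card)
    {w : List A} (hw : w ∈ L) (hlen : n₀ ≤ w.length) (hsp : 2 ≤ (arrF L w).card) :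
    ∃ b : A, (w ++ [b]) ∈ L ∧ 2 ≤ (arrF L (w ++ [b])).card := by
  classical
  by_contra hcon
  push_neg at hcon
  have hb : ∀ b ∈ depF L w, (arrF L (w ++ [b])).card ≤ 1 := by
    intro b hb
    have := hcon b (mem_depF.mp hb); omega
  have : (mF L w).card ≤ (depF L w).card := by
    rw [m_eq_sum hL]
    calc ∑ b ∈ depF L w, (arrF L (w ++ [b])).card ≤ ∑ _b ∈ depF L w, 1 :=
      Finset.sum_le_sum hb
    _ = (depF L w).card := by simp
  have := hneu w hw hlen
  omega

omit hns in
lemma parent_special {u : List A} (hu : u ∈ L) (hne : u ≠ [])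
    (hsp : 2 ≤ (arrF L u).card) :
    u.dropLast ∈ L ∧ 2 ≤ (arrF L u.dropLast).card := by
  have hsub : arrF L u ⊆ arrF L u.dropLast := by
    intro a ha
    rw [mem_arrF] at ha ⊢
    refine hL.1 _ ha _ (List.IsPrefix.isInfix ?_)
    refine ⟨[u.getLast hne], ?_⟩
    rw [List.cons_append, List.dropLast_append_getLast hne]
  constructor
  · exact hL.1 _ hu _ (List.IsPrefix.isInfix ⟨[u.getLast hne],
      List.dropLast_append_getLast hne⟩)
  · exact le_trans hsp (Finset.card_le_card hsub)

end structure1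

section lsstruct
set_option linter.unusedSectionVars false
variable [Fintype A] [DecidableEq A] {L : Set (List A)}

/-- the finset of left special words of length `n`. -/
noncomputable def LSfin (L : Set (List A)) [Fintype A] (n : ℕ) : Finset (List A) :=
  Set.Finite.toFinset ((List.finite_length_eq A n).subset
    (fun w (hw : w ∈ L ∧ w.length = n ∧ 2 ≤ (arrF L w).card) => hw.2.1))

@[simp] lemma mem_LSfin {n : ℕ} {w : List A} :
    w ∈ LSfin L n ↔ w ∈ L ∧ w.length = n ∧ 2 ≤ (arrF L w).card := by
  rw [LSfin]; exact Set.Finite.mem_toFinset ..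

variable (hL : IsLanguage L)
include hL

lemma LSfin_subset (n : ℕ) : LSfin L n ⊆ Lfin L n := by
  intro w hw
  rw [mem_LSfin] at hw
  exact mem_Lfin.mpr ⟨hw.1, hw.2.1⟩

lemma LS_card_le (n : ℕ) :
    (LSfin L n).card + (Lfin L n).card ≤ (Lfin L (n+1)).card := by
  classical
  have h1 : ∑ w ∈ Lfin L n, ((arrF L w).card - 1) + (Lfin L n).card
      = (Lfin L (n+1)).card := by
    rw [I2 hL n, Finset.card_eq_sum_ones (Lfin L n), ← Finset.sum_add_distrib]
    refine Finset.sum_congr rfl fun w hw => ?_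
    have := arr_pos hL (mem_Lfin.mp hw).1
    omega
  have h2 : (LSfin L n).card ≤ ∑ w ∈ Lfin L n, ((arrF L w).card - 1) := by
    calc (LSfin L n).card = ∑ _w ∈ LSfin L n, 1 := by simp
    _ ≤ ∑ w ∈ LSfin L n, ((arrF L w).card - 1) := by
        refine Finset.sum_le_sum fun w hw => ?_
        have := (mem_LSfin.mp hw).2.2
        omega
    _ ≤ ∑ w ∈ Lfin L n, ((arrF L w).card - 1) :=
        Finset.sum_le_sum_of_subset (LSfin_subset hL n)
  omega

lemma LS_mono {n₀ : ℕ}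
    (hneu : ∀ w ∈ L, n₀ ≤ w.length → (mF L w).card + 1 = (arrF L w).card + (depF L w).card)
    {n : ℕ} (hn : n₀ ≤ n) : (LSfin L n).card ≤ (LSfin L (n+1)).card := by
  classical
  have hsub : LSfin L n ⊆ (LSfin L (n+1)).image List.dropLast := by
    intro w hw
    rw [mem_LSfin] at hw
    obtain ⟨b, hb1, hb2⟩ := child_exists hL hneu hw.1 (by omega) hw.2.2
    refine Finset.mem_image.mpr ⟨w ++ [b], ?_, ?_⟩
    · rw [mem_LSfin]
      exact ⟨hb1, by simp [hw.2.1], hb2⟩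
    · simp
  calc (LSfin L n).card ≤ ((LSfin L (n+1)).image List.dropLast).card :=
    Finset.card_le_card hsub
  _ ≤ (LSfin L (n+1)).card := Finset.card_image_le

omit hL in
lemma ev_const_of_antitone (f : ℕ → ℕ) (h : ∀ i j, i ≤ j → f j ≤ f i) :
    ∃ N, ∀ n, N ≤ n → f n = f N := by
  have hne : (Set.range f).Nonempty := ⟨f 0, ⟨0, rfl⟩⟩
  obtain ⟨N, hN⟩ := Nat.sInf_mem hne
  refine ⟨N, fun n hn => ?_⟩
  have h1 : f n ≤ f N := h N n hn
  have h2 : f N ≤ f n := by rw [hN]; exact Nat.sInf_le ⟨n, rfl⟩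
  omega

/-- the stabilization point of the left-special structure -/
lemma exists_LS_threshold {n₀ : ℕ}
    (hneu : ∀ w ∈ L, n₀ ≤ w.length → (mF L w).card + 1 = (arrF L w).card + (depF L w).card)
    (hB : ∃ B, ∀ n, (LSfin L n).card ≤ B) :
    ∃ n₂, n₀ ≤ n₂ ∧ ∀ n, n₂ ≤ n → (LSfin L n).card = (LSfin L n₂).card := by
  obtain ⟨B, hBle⟩ := hB
  have hmono : ∀ i j, i ≤ j → (LSfin L (n₀ + i)).card ≤ (LSfin L (n₀ + j)).card := by
    intro i j hij
    induction hij with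
    | refl => exact le_refl _
    | step h ih =>
        refine le_trans ih ?_
        exact LS_mono hL hneu (by omega)
  obtain ⟨N, hN⟩ := ev_const_of_antitone (fun i => B - (LSfin L (n₀ + i)).card)
    (fun i j hij => by
      have := hmono i j hij
      have := hBle (n₀ + i)
      have := hBle (n₀ + j)
      omega)
  refine ⟨n₀ + N, by omega, fun n hn => ?_⟩
  have h1 := hN (n - n₀) (by omega)
  have h2 : n₀ + (n - n₀) = n := by omega
  rw [h2] at h1
  have := hBle n
  have := hBle (n₀ + N)
  omega

lemma dropLast_LS {n : ℕ} (hn : 1 ≤ n) {u : List A} (hu : u ∈ LSfin L (n+1)) :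
    u.dropLast ∈ LSfin L n := by
  rw [mem_LSfin] at hu
  have hne : u ≠ [] := by
    intro h; rw [h] at hu; simp at hu
  obtain ⟨h1, h2⟩ := parent_special hL hu.1 hne hu.2.2
  rw [mem_LSfin]
  exact ⟨h1, by rw [List.length_dropLast, hu.2.1]; omega, h2⟩

/-- injectivity of `dropLast` at stabilized levels. -/
lemma dropLast_injOn {n₀ n₂ : ℕ} (hn₀ : n₀ ≤ n₂) (h1 : 1 ≤ n₂)
    (hneu : ∀ w ∈ L, n₀ ≤ w.length → (mF L w).card + 1 = (arrF L w).card + (depF L w).card)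
    (hstab : ∀ n, n₂ ≤ n → (LSfin L n).card = (LSfin L n₂).card)
    {n : ℕ} (hn : n₂ ≤ n) :
    Set.InjOn List.dropLast (LSfin L (n+1) : Set (List A)) := by
  classical
  have himg : (LSfin L (n+1)).image List.dropLast = LSfin L n := by
    apply Finset.Subset.antisymm
    · intro w hw
      obtain ⟨u, hu, rfl⟩ := Finset.mem_image.mp hw
      exact dropLast_LS hL (by omega) hu
    · intro w hw
      rw [mem_LSfin] at hw
      obtain ⟨b, hb1, hb2⟩ := child_exists hL hneu hw.1 (by omega) hw.2.2
      refine Finset.mem_image.mpr ⟨w ++ [b], ?_, by simp⟩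
      rw [mem_LSfin]
      exact ⟨hb1, by simp [hw.2.1], hb2⟩
  apply Finset.injOn_of_card_image_eq
  rw [himg, hstab n hn, hstab (n+1) (by omega)]

lemma take_LS {n₂ : ℕ} {n₀ : ℕ} (hn₀ : n₀ ≤ n₂) (h1 : 1 ≤ n₂)
    (hneu : ∀ w ∈ L, n₀ ≤ w.length → (mF L w).card + 1 = (arrF L w).card + (depF L w).card)
    (hstab : ∀ n, n₂ ≤ n → (LSfin L n).card = (LSfin L n₂).card)
    {ℓ : ℕ} (hℓ : n₂ ≤ ℓ) (d : ℕ) :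
    (∀ u ∈ LSfin L (ℓ + d), u.take ℓ ∈ LSfin L ℓ) ∧
      Set.InjOn (List.take ℓ) (LSfin L (ℓ + d) : Set (List A)) := by
  induction d with
  | zero =>
      constructor
      · intro u hu
        have hlen : u.length = ℓ + 0 := (mem_LSfin.mp hu).2.1
        have e1 : u.take ℓ = u := by rw [show ℓ = u.length by omega, List.take_length]
        rw [e1]
        rwa [show ℓ + 0 = ℓ by omega] at hu
      · intro u hu u' hu' h
        have hlen : u.length = ℓ + 0 := (mem_LSfin.mp (by exact_mod_cast hu)).2.1
        have hlen' : u'.length = ℓ + 0 := (mem_LSfin.mp (by exact_mod_cast hu')).2.1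
        have e1 : u.take ℓ = u := by rw [show ℓ = u.length by omega, List.take_length]
        have e2 : u'.take ℓ = u' := by rw [show ℓ = u'.length by omega, List.take_length]
        rwa [e1, e2] at h
  | succ d ih =>
      have hkey : ∀ u ∈ LSfin L (ℓ + d + 1), u.take ℓ = u.dropLast.take ℓ := by
        intro u hu
        have hlen : u.length = ℓ + d + 1 := (mem_LSfin.mp hu).2.1
        have hne : u ≠ [] := by
          intro h; rw [h] at hlen; simp at hlen
        conv_lhs => rw [← List.dropLast_append_getLast hne]
        rw [List.take_append_of_le_length]
        rw [List.length_dropLast, hlen]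
        omega
      constructor
      · intro u hu
        rw [hkey u hu]
        exact ih.1 _ (dropLast_LS hL (le_trans h1 (le_trans hℓ (Nat.le_add_right _ _))) hu)
      · intro u hu u' hu' h
        have hu'' : u ∈ LSfin L (ℓ + d + 1) := by exact_mod_cast hu
        have hu''' : u' ∈ LSfin L (ℓ + d + 1) := by exact_mod_cast hu'
        rw [hkey u hu'', hkey u' hu'''] at h
        have hdl : u.dropLast = u'.dropLast := by
          refine ih.2 ?_ ?_ h
          · exact_mod_cast dropLast_LS hL (le_trans h1 (le_trans hℓ (Nat.le_add_right _ _))) hu''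
          · exact_mod_cast dropLast_LS hL (le_trans h1 (le_trans hℓ (Nat.le_add_right _ _))) hu'''
        exact dropLast_injOn hL hn₀ h1 hneu hstab (le_trans hℓ (Nat.le_add_right _ _)) hu hu' hdl

end lsstruct

section chains
variable {x : ℕ → A} {v : List A}

lemma suffix_of_suffix_le {s t l : List A} (h1 : s <:+ l) (h2 : t <:+ l)
    (hle : s.length ≤ t.length) : s <:+ t := by
  obtain ⟨p, hp⟩ := h1
  obtain ⟨q, hq⟩ := h2
  have h3 : q ++ t = p ++ s := hq.trans hp.symm
  have hlen : q.length + t.length = p.length + s.length := by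
    have := congrArg List.length h3; simpa using this
  have hq' : q.length ≤ p.length := by omega
  have e1 : (q ++ t).drop q.length = t := List.drop_left
  have e2 : (p ++ s).drop q.length = p.drop q.length ++ s :=
    List.drop_append_of_le_length hq'
  refine ⟨p.drop q.length, ?_⟩
  rw [← e2, ← h3, e1]

/-- a factor of `x` which ends with `v` and contains `v` only there. -/
def goodT (x : ℕ → A) (v : List A) (t : List A) : Prop :=
  t ∈ factorsOfR x ∧ v <:+ t ∧ ∀ s u : List A, t = s ++ (v ++ u) → u = []

lemma goodT_suffix {t s : List A} (ht : goodT x v t) (hs : s <:+ t)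
    (hlen : v.length ≤ s.length) : goodT x v s := by
  obtain ⟨p, hp⟩ := hs
  refine ⟨factorsOfR_infix ht.1 (List.IsSuffix.isInfix ⟨p, hp⟩), ?_, ?_⟩
  · exact suffix_of_suffix_le ht.2.1 ⟨p, hp⟩ hlen
  · intro α β h
    refine ht.2.2 (p ++ α) β ?_
    rw [← hp, h, List.append_assoc]

lemma goodT_v (hv : v ∈ factorsOfR x) : goodT x v v := by
  refine ⟨hv, List.suffix_refl v, ?_⟩
  intro s u h
  have := congrArg List.length h
  simp at this
  rw [← List.length_eq_zero_iff]
  omega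

/-- existence of long good words, given recurrence and arbitrarily long avoiders. -/
lemma exists_goodT (hrr : RightRecurrentSeq x) (hv : v ∈ factorsOfR x)
    (havoid : ∀ N : ℕ, ∃ u ∈ factorsOfR x, u.length = N ∧ ¬ v <:+: u) (n : ℕ) :
    ∃ t : List A, goodT x v t ∧ t.length = v.length + n := by
  obtain ⟨F, hF, hFlen, hFav⟩ := havoid (n + v.length)
  obtain ⟨i, hi0⟩ := hF
  rw [hFlen] at hi0
  have hi : win x i (n + v.length) = F := hi0
  set S : Set ℕ := {j | i ≤ j ∧ win x j v.length = v} with hS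
  have hSne : S.Nonempty := by
    obtain ⟨m, hm1, hm2⟩ := hrr v hv i
    exact ⟨m, hm1, hm2⟩
  set j := sInf S with hj
  obtain ⟨hj1, hj2⟩ : i ≤ j ∧ win x j v.length = v := Nat.sInf_mem hSne
  -- first claim : j ≥ i + n + 1
  have hclaim : i + n + 1 ≤ j := by
    by_contra hcon
    push_neg at hcon
    -- v is an infix of F
    apply hFav
    have hdecomp := win_add x i (j - i) (v.length + (n + v.length - (j - i) - v.length))
    rw [win_add x (i + (j - i)) v.length] at hdecomp
    rw [show i + (j - i) = j by omega] at hdecomp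
    rw [show (j - i) + (v.length + (n + v.length - (j - i) - v.length)) = n + v.length by
      omega] at hdecomp
    rw [hj2] at hdecomp
    exact ⟨win x i (j - i), win x (j + v.length) (n + v.length - (j - i) - v.length),
      by rw [← hi, hdecomp, List.append_assoc]⟩
  refine ⟨win x (j - n) (n + v.length), ⟨win_mem_factorsOfR x _ _, ?_, ?_⟩, by simp; omega⟩
  · refine ⟨win x (j - n) n, ?_⟩
    have e := win_add x (j - n) n v.length
    rw [show j - n + n = j by omega, hj2] at e
    exact e.symm
  · intro s u h
    by_contra hune
    have hlens : n + v.length = s.length + (v.length + u.length) := by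
      have := congrArg List.length h; simpa using this
    have hslt : s.length < n := by
      have : u.length ≠ 0 := fun h0 => hune (List.length_eq_zero_iff.mp h0)
      omega
    have hocc : win x (j - n + s.length) v.length = v := win_extract h
    have hmem : j - n + s.length ∈ S := ⟨by omega, hocc⟩
    have := Nat.sInf_le hmem
    omega

/-- `t` has arbitrarily long good extensions of which it is a suffix. -/
def hasLong (x : ℕ → A) (v : List A) (t : List A) : Prop :=
  ∀ m : ℕ, ∃ t', goodT x v t' ∧ t <:+ t' ∧ t'.length = t.length + m

lemma hasLong_v (hrr : RightRecurrentSeq x) (hv : v ∈ factorsOfR x)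
    (havoid : ∀ N : ℕ, ∃ u ∈ factorsOfR x, u.length = N ∧ ¬ v <:+: u) :
    hasLong x v v := by
  intro m
  obtain ⟨t, ht, hlen⟩ := exists_goodT hrr hv havoid m
  exact ⟨t, ht, ht.2.1, by omega⟩

lemma hasLong_step [Fintype A] {t : List A} (ht : goodT x v t) (hl : hasLong x v t) :
    ∃ a : A, goodT x v (a :: t) ∧ hasLong x v (a :: t) := by
  have hclaim : ∃ a : A, ∀ m : ℕ, ∃ t', goodT x v t' ∧ (a :: t) <:+ t' ∧
      t.length + 1 + m ≤ t'.length := by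
    by_contra hcon
    push_neg at hcon
    choose mf hmf using hcon
    classical
    set M := Finset.univ.sup mf with hM
    obtain ⟨t', ht', hsuf, hlen⟩ := hl (M + 1)
    obtain ⟨p, hp⟩ := hsuf
    have hpne : p ≠ [] := by
      intro h; rw [h] at hp; simp at hp
      rw [hp] at hlen; omega
    set a := p.getLast hpne with ha
    have hsuf2 : (a :: t) <:+ t' := by
      refine ⟨p.dropLast, ?_⟩
      rw [← hp]
      conv_rhs => rw [← List.dropLast_append_getLast hpne]
      rw [List.append_assoc]
      rfl
    have h1 := hmf a t' ht' hsuf2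
    have h2 : mf a ≤ M := Finset.le_sup (Finset.mem_univ a)
    omega
  obtain ⟨a, ha⟩ := hclaim
  have hvlen : v.length ≤ t.length := List.IsSuffix.length_le ht.2.1
  have hgood : goodT x v (a :: t) := by
    obtain ⟨t', ht', hsuf, _⟩ := ha 0
    exact goodT_suffix ht' hsuf (by simp; omega)
  refine ⟨a, hgood, ?_⟩
  intro m
  obtain ⟨t', ht', hsuf, hlen⟩ := ha m
  refine ⟨t'.drop (t'.length - (t.length + 1 + m)), ?_, ?_, ?_⟩
  · refine goodT_suffix ht' (List.drop_suffix _ _) ?_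
    rw [List.length_drop]
    omega
  · refine suffix_of_suffix_le hsuf (List.drop_suffix _ _) ?_
    rw [List.length_drop]
    simp
    omega
  · rw [List.length_drop]
    simp
    omega

/-- the chain of nested good words. -/
noncomputable def chainF [Fintype A] (hbase : goodT x v v ∧ hasLong x v v) :
    ℕ → {t : List A // goodT x v t ∧ hasLong x v t}
  | 0 => ⟨v, hbase⟩
  | (n+1) =>
      let p := chainF hbase n
      ⟨(hasLong_step p.2.1 p.2.2).choose :: p.1,
        (hasLong_step p.2.1 p.2.2).choose_spec⟩

lemma chainF_succ [Fintype A] (hbase : goodT x v v ∧ hasLong x v v) (n : ℕ) :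
    ∃ a : A, (chainF hbase (n+1)).1 = a :: (chainF hbase n).1 :=
  ⟨_, rfl⟩

lemma chainF_length [Fintype A] (hbase : goodT x v v ∧ hasLong x v v) (n : ℕ) :
    (chainF hbase n).1.length = v.length + n := by
  induction n with
  | zero => simp [chainF]
  | succ n ih =>
      obtain ⟨a, ha⟩ := chainF_succ hbase n
      rw [ha]
      simp [ih]
      omega

lemma chainF_suffix [Fintype A] (hbase : goodT x v v ∧ hasLong x v v) (n k : ℕ) :
    (chainF hbase n).1 <:+ (chainF hbase (n+k)).1 := by
  induction k with
  | zero => exact List.suffix_refl _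
  | succ k ih =>
      obtain ⟨a, ha⟩ := chainF_succ hbase (n+k)
      rw [show n + (k+1) = (n+k)+1 by omega, ha]
      exact ih.trans (List.suffix_cons a _)

end chains

/-- without strong bispecials, a right recurrent sequence with
factors in `L` generates a uniformly recurrent language. -/
theorem stmt11 [Fintype A] (L : Set (List A)) (hL : IsLanguage L)
    (hns : ∀ w : List A, ¬ StrongBispecial L w)
    (x : ℕ → A) (hx : RInf L x) (hrr : RightRecurrentSeq x) :
    IsLanguage (factorsOfR x) ∧ UniformlyRecurrent (factorsOfR x) := by
  classical
  refine ⟨factorsOfR_isLanguage hrr, ?_⟩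
  intro v hv
  by_contra hcon
  push_neg at hcon
  have havoid : ∀ Nn : ℕ, ∃ u ∈ factorsOfR x, u.length = Nn ∧ ¬ v <:+: u := by
    intro Nn
    obtain ⟨u, hu1, hu2, hu3⟩ := hcon Nn
    exact ⟨u, hu1, hu2, hu3⟩
  -- structure of L
  obtain ⟨n₀, hneu⟩ := exists_neutral_threshold hL hns
  have hanti : ∀ i j, i ≤ j → ((Lfin L (j+1)).card - (Lfin L j).card)
      ≤ ((Lfin L (i+1)).card - (Lfin L i).card) := by
    intro i j hij
    induction hij with
    | refl => exact le_refl _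
    | step h ih => exact le_trans (s_antitone hL hns _) ih
  have hB : ∀ n, (LSfin L n).card ≤ (Lfin L 1).card := by
    intro n
    have h1 := LS_card_le hL n
    have h2 : (Lfin L (n+1)).card - (Lfin L n).card
        ≤ (Lfin L 1).card - (Lfin L 0).card := hanti 0 n (Nat.zero_le n)
    have h3 := pC_mono hL n
    omega
  obtain ⟨n₂, hn₂0, hstab⟩ := exists_LS_threshold hL hneu ⟨_, hB⟩
  set N := n₂ + 1 with hNdef
  have hstabN : ∀ n, N ≤ n → (LSfin L n).card = (LSfin L N).card := by
    intro n hn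
    rw [hstab n (by omega), hstab N (by omega)]
  have hn₀N : n₀ ≤ N := by omega
  have h1N : 1 ≤ N := by omega
  -- the chain
  have hbase : goodT x v v ∧ hasLong x v v := ⟨goodT_v hv, hasLong_v hrr hv havoid⟩
  set c : ℕ → List A := fun n => (chainF hbase n).1 with hc
  have hclen : ∀ k, (c k).length = v.length + k := fun k => chainF_length hbase k
  -- divergence: arbitrarily far along the chain we find left special words
  have hdiv : ∀ n : ℕ, ∃ m : ℕ, n ≤ m ∧ 2 ≤ (arrF L (c m)).card := by
    intro n
    obtain ⟨q, hq0⟩ := hv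
    have hq : win x q v.length = v := hq0
    have hcF : c n ∈ factorsOfR x := (chainF hbase n).2.1.1
    obtain ⟨p, hp1, hp2'⟩ := hrr (c n) hcF (q + 1)
    have hp2 : win x p (c n).length = c n := hp2'
    set Q : ℕ → Prop := fun jj => win x (p - jj) (v.length + n + jj) = c (n + jj) with hQdef
    have hQ0 : Q 0 := by
      show win x (p - 0) (v.length + n + 0) = c (n + 0)
      rw [Nat.sub_zero, Nat.add_zero, Nat.add_zero]
      have := hp2
      rwa [hclen n] at this
    have hQp : ¬ Q p := by
      intro hQ
      have hQ' : win x 0 (v.length + n + p) = c (n + p) := by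
        have : win x (p - p) (v.length + n + p) = c (n + p) := hQ
        rwa [Nat.sub_self] at this
      have hrest : v.length + n + p
          = q + (v.length + (v.length + n + p - q - v.length)) := by omega
      have hdec := win_add x 0 q (v.length + (v.length + n + p - q - v.length))
      rw [win_add x (0 + q) v.length] at hdec
      rw [show (0:ℕ) + q = q by omega] at hdec
      rw [hq] at hdec
      rw [← hrest] at hdec
      rw [hQ'] at hdec
      have hemp := (chainF hbase (n+p)).2.1.2.2 _ _ hdec
      have hle : (win x (q + v.length) (v.length + n + p - q - v.length)).length = 0 := by
        rw [hemp]; rfl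
      rw [win_length] at hle
      omega
    have hex : ∃ jj, ¬ Q jj := ⟨p, hQp⟩
    set j := sInf {jj | ¬ Q jj} with hjd
    have hjmem : ¬ Q j := Nat.sInf_mem hex
    have hj1 : j ≠ 0 := fun h => hjmem (by rw [h]; exact hQ0)
    have hjle : j ≤ p := by
      by_contra hgt
      push_neg at hgt
      have := Nat.sInf_le (show p ∈ {jj | ¬ Q jj} from hQp)
      omega
    have hQj1 : Q (j - 1) := by
      by_contra hnq
      have := Nat.sInf_le (show (j-1) ∈ {jj | ¬ Q jj} from hnq)
      omega
    obtain ⟨a, ha⟩ := chainF_succ hbase (n + (j - 1))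
    have hcj : c (n + j) = a :: c (n + (j - 1)) := by
      rw [show n + j = (n + (j-1)) + 1 by omega]
      exact ha
    have hwin := win_cons x (p - j) (v.length + n + (j - 1))
    have hidx : p - j + 1 = p - (j - 1) := by omega
    rw [hidx] at hwin
    have hQj1' : win x (p - (j-1)) (v.length + n + (j-1)) = c (n + (j-1)) := hQj1
    rw [hQj1'] at hwin
    have hne : x (p - j) ≠ a := by
      intro heq
      apply hjmem
      show win x (p - j) (v.length + n + j) = c (n + j)
      rw [show v.length + n + j = v.length + n + (j-1) + 1 by omega, hwin, heq, hcj]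
    have hin1 : x (p - j) :: c (n + (j-1)) ∈ L := by
      rw [← hwin]; exact hx _ _
    have hin2 : a :: c (n + (j-1)) ∈ L := by
      rw [← hcj]
      exact factorsOfR_subset hx (chainF hbase (n+j)).2.1.1
    refine ⟨n + (j - 1), by omega, ?_⟩
    have : 1 < (arrF L (c (n + (j-1)))).card :=
      Finset.one_lt_card.mpr ⟨x (p - j), by simpa using hin1, a, by simpa using hin2, hne⟩
    omega
  -- upgraded: chain elements in the left special structure
  have hdiv' : ∀ n : ℕ, ∃ m : ℕ, n ≤ m ∧ N ≤ m ∧ c m ∈ LSfin L (v.length + m) := by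
    intro n
    obtain ⟨m, hm1, hm2⟩ := hdiv (max n N)
    refine ⟨m, le_trans (le_max_left n N) hm1, le_trans (le_max_right n N) hm1, ?_⟩
    rw [mem_LSfin]
    exact ⟨factorsOfR_subset hx (chainF hbase m).2.1.1, hclen m, hm2⟩
  -- the increasing sequence
  set M : ℕ → ℕ := fun i => Nat.rec (hdiv' N).choose (fun _ prev => (hdiv' (prev + 1)).choose) i
    with hMdef
  have hMge : ∀ i, N ≤ M i := by
    intro i
    cases i with
    | zero => exact (hdiv' N).choose_spec.2.1
    | succ i => exact (hdiv' (M i + 1)).choose_spec.2.1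
  have hMs : ∀ i, M i + 1 ≤ M (i+1) := fun i => (hdiv' (M i + 1)).choose_spec.1
  have hMmem : ∀ i, c (M i) ∈ LSfin L (v.length + M i) := by
    intro i
    cases i with
    | zero => exact (hdiv' N).choose_spec.2.2
    | succ i => exact (hdiv' (M i + 1)).choose_spec.2.2
  have hMlt : ∀ i j, i < j → M i < M j := by
    intro i j hij
    induction j with
    | zero => omega
    | succ j ih =>
        rcases Nat.lt_or_ge i j with h | h
        · have := ih h
          have := hMs j
          omega
        · have hieq : i = j := by omega
          subst hieq
          have := hMs i
          omega
  have hmemN : ∀ i, (c (M i)).take N ∈ LSfin L N := by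
    intro i
    have hup := hMmem i
    have hdec : v.length + M i = N + (v.length + M i - N) := by
      have := hMge i; omega
    rw [hdec] at hup
    exact (take_LS hL hn₀N h1N hneu hstabN (le_refl N) _).1 _ hup
  set g : ℕ → {y // y ∈ LSfin L N} := fun i => ⟨(c (M i)).take N, hmemN i⟩ with hg
  obtain ⟨i, j, hij, hgeq⟩ := Finite.exists_ne_map_eq_of_infinite g
  have heq' : (c (M i)).take N = (c (M j)).take N := congrArg Subtype.val hgeq
  have main : ∀ i j : ℕ, M i < M j → (c (M i)).take N = (c (M j)).take N → False := by
    intro i j hlt heq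
    have hti : c (M i) ∈ LSfin L (v.length + M i) := hMmem i
    have htj : c (M j) ∈ LSfin L (v.length + M j) := hMmem j
    have hdecj : v.length + M j = (v.length + M i) + (M j - M i) := by omega
    rw [hdecj] at htj
    have ht'' : (c (M j)).take (v.length + M i) ∈ LSfin L (v.length + M i) :=
      (take_LS hL hn₀N h1N hneu hstabN
        (show N ≤ v.length + M i by have := hMge i; omega) _).1 _ htj
    have htake2 : ((c (M j)).take (v.length + M i)).take N = (c (M j)).take N := by
      rw [List.take_take]
      rw [Nat.min_eq_left (show N ≤ v.length + M i by have := hMge i; omega)]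
    have hinj := (take_LS hL hn₀N h1N hneu hstabN
      (show N ≤ N from le_refl N) (v.length + M i - N)).2
    have hlev : N + (v.length + M i - N) = v.length + M i := by
      have := hMge i; omega
    rw [hlev] at hinj
    have hteq : c (M i) = (c (M j)).take (v.length + M i) := by
      apply hinj (by exact_mod_cast hti) (by exact_mod_cast ht'')
      rw [htake2]
      exact heq
    obtain ⟨s, hs0⟩ := (chainF hbase (M i)).2.1.2.1
    have hs : s ++ v = c (M i) := hs0
    have hdrop := List.take_append_drop (v.length + M i) (c (M j))
    rw [← hteq] at hdrop
    have hform : c (M j) = s ++ (v ++ (c (M j)).drop (v.length + M i)) := by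
      conv_lhs => rw [← hdrop]
      rw [← List.append_assoc, hs]
    have hz := (chainF hbase (M j)).2.1.2.2 _ _ hform
    have hzl : ((c (M j)).drop (v.length + M i)).length = 0 := by rw [hz]; rfl
    rw [List.length_drop] at hzl
    have hlj : (c (M j)).length = v.length + M j := hclen (M j)
    omega
  rcases Nat.lt_trichotomy i j with h | h | h
  · exact main i j (hMlt i j h) heq'
  · exact hij h
  · exact main j i (hMlt j i h) heq'.symm
end

section
/- Suppose L has no strong bispecial word. If a bi-infinite sequence x ∈ X_L is right recurrent, then x is also left recurrent, and the language of factors of x is uniformly recurrent. -/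
open List Set

variable {A : Type*}

variable {F : Finset A}

namespace S12

variable {A : Type*}

/-! ### Window API -/

/-- The window of `x` starting at `m : ℤ` of length `k`. -/
def win (x : ℤ → A) (m : ℤ) (k : ℕ) : List A := List.ofFn fun i : Fin k => x (m + (i : ℕ))

@[simp] lemma win_length (x : ℤ → A) (m : ℤ) (k : ℕ) : (win x m k).length = k := by
  simp [win]

lemma occursAtZ_iff {x : ℤ → A} {m : ℤ} {w : List A} :
    occursAtZ x m w ↔ win x m w.length = w := Iff.rfl

lemma occursAtZ_win (x : ℤ → A) (m : ℤ) (k : ℕ) : occursAtZ x m (win x m k) := by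
  rw [occursAtZ_iff, win_length]

lemma win_mem_factorsZ (x : ℤ → A) (m : ℤ) (k : ℕ) : win x m k ∈ FactorsZ x :=
  ⟨m, occursAtZ_win x m k⟩

lemma win_add (x : ℤ → A) (m : ℤ) (k l : ℕ) :
    win x m (k + l) = win x m k ++ win x (m + (k : ℤ)) l := by
  unfold win
  rw [List.ofFn_add]
  congr 1 <;>
    refine congrArg List.ofFn (funext fun i => congrArg x ?_) <;>
      simp only [Fin.coe_castAdd, Fin.coe_natAdd] <;> push_cast <;> ring

lemma win_one (x : ℤ → A) (m : ℤ) : win x m 1 = [x m] := by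
  simp [win, List.ofFn_succ]

lemma win_succ (x : ℤ → A) (m : ℤ) (k : ℕ) :
    win x m (k + 1) = win x m k ++ [x (m + (k : ℤ))] := by
  rw [win_add, win_one]

lemma drop_win (x : ℤ → A) (m : ℤ) {j k : ℕ} (h : j ≤ k) :
    (win x m k).drop j = win x (m + (j : ℤ)) (k - j) := by
  have hk : k = j + (k - j) := by omega
  conv_lhs => rw [hk, win_add]
  have := List.drop_left (l₁ := win x m j) (l₂ := win x (m + (j : ℤ)) (k - j))
  rwa [win_length] at this

lemma take_win (x : ℤ → A) (m : ℤ) {j k : ℕ} (h : j ≤ k) :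
    (win x m k).take j = win x m j := by
  have hk : k = j + (k - j) := by omega
  conv_lhs => rw [hk, win_add]
  have := List.take_left (l₁ := win x m j) (l₂ := win x (m + (j : ℤ)) (k - j))
  rwa [win_length] at this

lemma prefix_win (x : ℤ → A) (m : ℤ) {j k : ℕ} (h : j ≤ k) :
    win x m j <+: win x m k := by
  rw [show k = j + (k - j) by omega, win_add]
  exact List.prefix_append _ _

lemma factorsZ_subset {x : ℤ → A} {L : Set (List A)} (hx : x ∈ XL L) :
    FactorsZ x ⊆ L := by
  rintro w ⟨m, hw⟩
  have := hx m w.length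
  rwa [hw] at this

lemma occursAtZ_of_infix {x : ℤ → A} {m : ℤ} {u w : List A}
    (hm : occursAtZ x m u) (h : w <:+: u) :
    ∃ j : ℕ, j + w.length ≤ u.length ∧ occursAtZ x (m + (j : ℤ)) w := by
  obtain ⟨s, t, hst⟩ := h
  have hlen : u.length = s.length + (w.length + t.length) := by
    rw [← hst]; simp
  refine ⟨s.length, by omega, ?_⟩
  rw [occursAtZ_iff] at hm ⊢
  calc win x (m + (s.length : ℤ)) w.length
      = (win x (m + (s.length : ℤ)) (u.length - s.length)).take w.length :=
        (take_win _ _ (by omega)).symm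
    _ = ((win x m u.length).drop s.length).take w.length := by
        rw [drop_win _ _ (by omega)]
    _ = (u.drop s.length).take w.length := by rw [hm]
    _ = w := by
        rw [← hst, List.append_assoc, List.drop_left, List.take_left]

lemma infix_mem_factorsZ {x : ℤ → A} {u w : List A}
    (hu : u ∈ FactorsZ x) (h : w <:+: u) : w ∈ FactorsZ x := by
  obtain ⟨m, hm⟩ := hu
  obtain ⟨j, _, hj⟩ := occursAtZ_of_infix hm h
  exact ⟨_, hj⟩

/-! ### Counting -/

section Counting

attribute [local instance] Classical.propDecidable

variable [Fintype A] (L : Set (List A))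

/-- Words of `L` of length `n`, as a `Finset`. -/
noncomputable def lvl (n : ℕ) : Finset (List A) :=
  ((Finset.univ : Finset (Fin n → A)).image List.ofFn).filter (fun w => w ∈ L)

lemma mem_lvl {n : ℕ} {w : List A} : w ∈ lvl L n ↔ w ∈ L ∧ w.length = n := by
  simp only [lvl, Finset.mem_filter, Finset.mem_image, Finset.mem_univ, true_and]
  constructor
  · rintro ⟨⟨f, rfl⟩, h⟩
    exact ⟨h, by simp⟩
  · rintro ⟨h1, h2⟩
    subst h2
    exact ⟨⟨w.get, List.ofFn_get w⟩, h1⟩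

/-- Arrival set as a `Finset`. -/
noncomputable def arrF (w : List A) : Finset A := Finset.univ.filter (fun a : A => a :: w ∈ L)

/-- Departure set as a `Finset`. -/
noncomputable def depF (w : List A) : Finset A := Finset.univ.filter (fun b : A => w ++ [b] ∈ L)

lemma mem_arrF {w : List A} {a : A} : a ∈ arrF L w ↔ a :: w ∈ L := by simp [arrF]

lemma mem_depF {w : List A} {b : A} : b ∈ depF L w ↔ w ++ [b] ∈ L := by simp [depF]

lemma arrSet_ncard (w : List A) : (arrSet L w).ncard = (arrF L w).card := by
  rw [show arrSet L w = ↑(arrF L w) from by ext a; simp [arrSet, mem_arrF]]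
  exact Set.ncard_coe_finset _

lemma depSet_ncard (w : List A) : (depSet L w).ncard = (depF L w).card := by
  rw [show depSet L w = ↑(depF L w) from by ext a; simp [depSet, mem_depF]]
  exact Set.ncard_coe_finset _

/-- Extension pairs as a `Finset`. -/
noncomputable def extF (w : List A) : Finset (A × A) :=
  Finset.univ.filter (fun p : A × A => p.1 :: (w ++ [p.2]) ∈ L)

lemma extCount_eq (w : List A) : extCount L w = (extF L w).card := by
  rw [extCount,
    show {p : A × A | p.1 :: (w ++ [p.2]) ∈ L} = ↑(extF L w) from by ext p; simp [extF]]
  exact Set.ncard_coe_finset _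

variable (hL : IsLanguage L)
include hL

lemma one_le_depF {w : List A} (hw : w ∈ L) : 1 ≤ (depF L w).card := by
  obtain ⟨a, ha⟩ := hL.2.2 w hw
  exact Finset.card_pos.2 ⟨a, (mem_depF L).2 ha⟩

lemma one_le_arrF {w : List A} (hw : w ∈ L) : 1 ≤ (arrF L w).card := by
  obtain ⟨a, ha⟩ := hL.2.1 w hw
  exact Finset.card_pos.2 ⟨a, (mem_arrF L).2 ha⟩

lemma depF_cons_subset (a : A) (w : List A) : depF L (a :: w) ⊆ depF L w := by
  intro b hb
  rw [mem_depF] at hb ⊢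
  exact hL.1 _ hb _ ((List.suffix_cons a (w ++ [b])).isInfix)

lemma arrF_append_subset (b : A) (w : List A) : arrF L (w ++ [b]) ⊆ arrF L w := by
  intro a ha
  rw [mem_arrF] at ha ⊢
  refine hL.1 _ ha _ ?_
  exact (List.prefix_append (a :: w) [b]).isInfix

lemma mem_of_cons_mem {a : A} {w : List A} (h : a :: w ∈ L) : w ∈ L :=
  hL.1 _ h _ (List.suffix_cons a w).isInfix

lemma extF_card_fst : (extF L w).card = ∑ a ∈ arrF L w, (depF L (a :: w)).card := by
  rw [Finset.card_eq_sum_card_fiberwise (f := Prod.fst) (t := arrF L w) ?_]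
  · refine Finset.sum_congr rfl fun a ha => ?_
    rw [show Finset.filter (fun p => Prod.fst p = a) (extF L w)
        = (depF L (a :: w)).image (fun b => (a, b)) from ?_]
    · exact Finset.card_image_of_injective _ (fun b c h => by
        simpa using congrArg Prod.snd h)
    · ext p
      simp only [Finset.mem_filter, extF, Finset.mem_univ, true_and, Finset.mem_image, mem_depF]
      constructor
      · rintro ⟨h1, rfl⟩
        exact ⟨p.2, by simpa using h1, rfl⟩
      · rintro ⟨b, hb, rfl⟩
        exact ⟨by simpa using hb, rfl⟩
  · intro p hp
    simp only [extF, Finset.mem_coe, Finset.mem_filter, Finset.mem_univ, true_and] at hp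
    rw [Finset.mem_coe, mem_arrF]
    exact hL.1 _ hp _ ((List.prefix_append (p.1 :: w) [p.2]).isInfix)

lemma extF_card_snd : (extF L w).card = ∑ b ∈ depF L w, (arrF L (w ++ [b])).card := by
  rw [Finset.card_eq_sum_card_fiberwise (f := Prod.snd) (t := depF L w) ?_]
  · refine Finset.sum_congr rfl fun b hb => ?_
    rw [show Finset.filter (fun p => Prod.snd p = b) (extF L w)
        = (arrF L (w ++ [b])).image (fun a => (a, b)) from ?_]
    · exact Finset.card_image_of_injective _ (fun a c h => by
        simpa using congrArg Prod.fst h)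
    · ext p
      simp only [Finset.mem_filter, extF, Finset.mem_univ, true_and, Finset.mem_image, mem_arrF]
      constructor
      · rintro ⟨h1, rfl⟩
        exact ⟨p.1, by simpa using h1, rfl⟩
      · rintro ⟨a, ha, rfl⟩
        exact ⟨by simpa using ha, rfl⟩
  · intro p hp
    simp only [extF, Finset.mem_coe, Finset.mem_filter, Finset.mem_univ, true_and] at hp
    rw [Finset.mem_coe, mem_depF]
    exact hL.1 _ hp _ ⟨[p.1], [], by simp⟩

lemma arrF_le_extF {w : List A} : (arrF L w).card ≤ (extF L w).card := by
  rw [extF_card_fst L hL]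
  calc (arrF L w).card = ∑ _a ∈ arrF L w, 1 := by simp
    _ ≤ _ := Finset.sum_le_sum fun a ha =>
        one_le_depF L hL ((mem_arrF L).1 ha)

lemma extF_le {w : List A} (hw : w ∈ L)
    (hns : ∀ u : List A, ¬ StrongBispecial L u) :
    (extF L w).card ≤ (arrF L w).card + (depF L w).card - 1 := by
  rcases le_or_gt (arrF L w).card 1 with h1 | h1
  · have ha := one_le_arrF L hL hw
    have : (extF L w).card ≤ ∑ a ∈ arrF L w, (depF L w).card := by
      rw [extF_card_fst L hL]
      exact Finset.sum_le_sum fun a _ => Finset.card_le_card (depF_cons_subset L hL a w)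
    rw [Finset.sum_const, smul_eq_mul] at this
    have hd := one_le_depF L hL hw
    have h11 : (arrF L w).card = 1 := le_antisymm h1 ha
    rw [h11, one_mul] at this
    omega
  · rcases le_or_gt (depF L w).card 1 with h2 | h2
    · have hd := one_le_depF L hL hw
      have : (extF L w).card ≤ ∑ b ∈ depF L w, (arrF L w).card := by
        rw [extF_card_snd L hL]
        exact Finset.sum_le_sum fun b _ => Finset.card_le_card (arrF_append_subset L hL b w)
      rw [Finset.sum_const, smul_eq_mul] at this
      have h22 : (depF L w).card = 1 := le_antisymm h2 hd
      rw [h22, one_mul] at this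
      omega
    · have hbis : Bispecial L w := by
        constructor
        · rw [arrSet_ncard]; exact h1
        · rw [depSet_ncard]; exact h2
      have := hns w
      rw [StrongBispecial] at this
      push_neg at this
      have := this hbis
      rw [extCount_eq, arrSet_ncard, depSet_ncard] at this
      omega

/-- The complexity difference `p(n+1) - p(n)`, counted as a sum of `d(w) - 1`. -/
noncomputable def sC (n : ℕ) : ℕ := ∑ w ∈ lvl L n, ((depF L w).card - 1)

lemma lvl_succ (n : ℕ) :
    lvl L (n + 1) = (lvl L n).biUnion (fun w => (arrF L w).image (fun a => a :: w)) := by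
  ext w'
  simp only [mem_lvl, Finset.mem_biUnion, Finset.mem_image, mem_arrF]
  constructor
  · rintro ⟨h1, h2⟩
    rcases w' with _ | ⟨a, w⟩
    · simp at h2
    · exact ⟨w, ⟨mem_of_cons_mem L hL h1, by simpa using h2⟩, a, h1, rfl⟩
  · rintro ⟨w, ⟨_, hlen⟩, a, ha, rfl⟩
    exact ⟨ha, by simp [hlen]⟩

lemma sum_lvl_succ (f : List A → ℕ) (n : ℕ) :
    ∑ w' ∈ lvl L (n + 1), f w' = ∑ w ∈ lvl L n, ∑ a ∈ arrF L w, f (a :: w) := by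
  rw [lvl_succ L hL, Finset.sum_biUnion ?_]
  · exact Finset.sum_congr rfl fun w _ =>
      Finset.sum_image fun a _ b _ h => by simpa using h
  · intro w1 h1 w2 h2 hne
    simp only [Function.onFun]
    rw [Finset.disjoint_left]
    intro z hz1 hz2
    simp only [Finset.mem_image] at hz1 hz2
    obtain ⟨a1, _, rfl⟩ := hz1
    obtain ⟨a2, _, h⟩ := hz2
    exact hne (by simpa using (congrArg List.tail h).symm)

lemma sC_succ (hns : ∀ u : List A, ¬ StrongBispecial L u) (n : ℕ) :
    sC L (n + 1) = ∑ w ∈ lvl L n, ((extF L w).card - (arrF L w).card) := by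
  rw [sC, sum_lvl_succ L hL]
  refine Finset.sum_congr rfl fun w hw => ?_
  have key : ∑ a ∈ arrF L w, ((depF L (a :: w)).card - 1) + (arrF L w).card
      = (extF L w).card := by
    rw [extF_card_fst L hL, Finset.card_eq_sum_ones (arrF L w), ← Finset.sum_add_distrib]
    refine Finset.sum_congr rfl fun a ha => ?_
    have := one_le_depF L hL ((mem_arrF L).1 ha)
    omega
  omega

lemma sC_antitone (hns : ∀ u : List A, ¬ StrongBispecial L u) (n : ℕ) :
    sC L (n + 1) ≤ sC L n := by
  rw [sC_succ L hL hns, sC]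
  refine Finset.sum_le_sum fun w hw => ?_
  have hwL := ((mem_lvl L).1 hw).1
  have h1 := extF_le L hL hwL hns
  have h2 := arrF_le_extF L hL (w := w)
  have h3 := one_le_arrF L hL hwL
  have h4 := one_le_depF L hL hwL
  omega

lemma exists_const_of_antitone (s : ℕ → ℕ) (N : ℕ) (h : ∀ n, N ≤ n → s (n + 1) ≤ s n) :
    ∃ M, N ≤ M ∧ ∀ m, M ≤ m → s m = s M := by
  have mono : ∀ a b, N ≤ a → a ≤ b → s b ≤ s a := by
    intro a b ha hab
    induction b, hab using Nat.le_induction with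
    | base => exact le_rfl
    | succ b hb ih => exact (h b (ha.trans hb)).trans ih
  have hne : {k | ∃ m, N ≤ m ∧ s m = k}.Nonempty := ⟨s N, N, le_rfl, rfl⟩
  obtain ⟨M, hM, hsM⟩ := Nat.sInf_mem hne
  refine ⟨M, hM, fun m hm => ?_⟩
  have h1 : s m ≤ s M := mono M m hM hm
  have h2 : sInf {k | ∃ m, N ≤ m ∧ s m = k} ≤ s m := Nat.sInf_le ⟨m, hM.trans hm, rfl⟩
  omega

/-- Right special words of length `n`. -/
noncomputable def rsp (n : ℕ) : Finset (List A) :=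
  (lvl L n).filter (fun w => 2 ≤ (depF L w).card)

lemma card_rsp_le (n : ℕ) : (rsp L n).card ≤ sC L n := by
  calc (rsp L n).card = ∑ _w ∈ rsp L n, 1 := by simp
    _ ≤ ∑ w ∈ rsp L n, ((depF L w).card - 1) := Finset.sum_le_sum fun w hw => by
        have := (Finset.mem_filter.1 hw).2; omega
    _ ≤ sC L n := Finset.sum_le_sum_of_subset (Finset.filter_subset _ _)

lemma tail_mem_rsp {n : ℕ} {w : List A} (hw : w ∈ rsp L (n + 1)) : w.tail ∈ rsp L n := by
  simp only [rsp, Finset.mem_filter, mem_lvl] at hw ⊢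
  obtain ⟨⟨hwL, hlen⟩, hd⟩ := hw
  refine ⟨⟨hL.1 _ hwL _ (List.tail_suffix w).isInfix, by simp [hlen]⟩, ?_⟩
  refine le_trans hd (Finset.card_le_card ?_)
  intro b hb
  rw [mem_depF] at hb ⊢
  obtain ⟨s, hs⟩ := List.tail_suffix w
  have hsuf : w.tail ++ [b] <:+ w ++ [b] := ⟨s, by rw [← List.append_assoc, hs]⟩
  exact hL.1 _ hb _ hsuf.isInfix

lemma drop_mem_rsp : ∀ (d m : ℕ) (w : List A), w ∈ rsp L (m + d) → w.drop d ∈ rsp L m := by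
  intro d
  induction d with
  | zero => intro m w hw; simpa using hw
  | succ d ih =>
    intro m w hw
    have h1 : w.tail ∈ rsp L (m + d) := tail_mem_rsp L hL hw
    have h2 := ih m w.tail h1
    rwa [← List.drop_one, List.drop_drop, Nat.add_comm 1 d] at h2

lemma chain_data (hns : ∀ u : List A, ¬ StrongBispecial L u) :
    ∃ N1 : ℕ,
      (∀ m, N1 ≤ m → (rsp L m).card = (rsp L N1).card) ∧
      (∀ n, N1 ≤ n → ∀ w ∈ rsp L n, ∃ a, a :: w ∈ rsp L (n + 1)) := by
  obtain ⟨N0, -, hN0⟩ := exists_const_of_antitone L hL (sC L) 0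
    (fun n _ => sC_antitone L hL hns n)
  -- neutrality
  have hneut : ∀ n, N0 ≤ n → ∀ w ∈ lvl L n,
      (extF L w).card - (arrF L w).card = (depF L w).card - 1 := by
    intro n hn
    have hle : ∀ w ∈ lvl L n,
        (extF L w).card - (arrF L w).card ≤ (depF L w).card - 1 := by
      intro w hw
      have hwL := ((mem_lvl L).1 hw).1
      have h1 := extF_le L hL hwL hns
      have h2 := arrF_le_extF L hL (w := w)
      have h3 := one_le_arrF L hL hwL
      have h4 := one_le_depF L hL hwL
      omega
    have hsum : ∑ w ∈ lvl L n, ((extF L w).card - (arrF L w).card)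
        = ∑ w ∈ lvl L n, ((depF L w).card - 1) := by
      rw [← sC_succ L hL hns n, ← sC, hN0 n hn, hN0 (n + 1) (hn.trans (Nat.le_succ n))]
    exact fun w hw => (Finset.sum_eq_sum_iff_of_le hle).1 hsum w hw
  -- surjectivity of the tail map on right special words
  have hsurj : ∀ n, N0 ≤ n → ∀ w ∈ rsp L n, ∃ a, a :: w ∈ rsp L (n + 1) := by
    intro n hn w hw
    obtain ⟨hwlvl, hd⟩ := Finset.mem_filter.1 hw
    obtain ⟨hwL, hlen⟩ := (mem_lvl L).1 hwlvl
    by_contra hno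
    push_neg at hno
    have hall : ∀ a ∈ arrF L w, (depF L (a :: w)).card = 1 := by
      intro a ha
      have h1 := one_le_depF L hL ((mem_arrF L).1 ha)
      have h2 : ¬ 2 ≤ (depF L (a :: w)).card := fun h2 =>
        hno a (Finset.mem_filter.2
          ⟨(mem_lvl L).2 ⟨(mem_arrF L).1 ha, by simp [hlen]⟩, h2⟩)
      omega
    have hext : (extF L w).card = (arrF L w).card := by
      rw [extF_card_fst L hL, Finset.card_eq_sum_ones]
      exact Finset.sum_congr rfl hall
    have hneq := hneut n hn w hwlvl
    have h2 := arrF_le_extF L hL (w := w)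
    omega
  -- monotone and bounded cardinalities
  have hmono : ∀ n, N0 ≤ n → (rsp L n).card ≤ (rsp L (n + 1)).card := by
    intro n hn
    apply Finset.card_le_card_of_surjOn List.tail
    intro w hw
    rw [Finset.mem_coe] at hw
    obtain ⟨a, ha⟩ := hsurj n hn w hw
    exact ⟨a :: w, Finset.mem_coe.2 ha, rfl⟩
  obtain ⟨N1, hN1ge, hN1⟩ := exists_const_of_antitone L hL
    (fun n => sC L N0 - (rsp L n).card) N0 (fun n hn => by
      have := hmono n hn; omega)
  have hbound : ∀ m, N0 ≤ m → (rsp L m).card ≤ sC L N0 := fun m hm =>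
    (card_rsp_le L hL m).trans (le_of_eq (hN0 m hm))
  refine ⟨N1, fun m hm => ?_, fun n hn => hsurj n (hN1ge.trans hn)⟩
  have h1 := hN1 m hm
  have h2 := hbound m (hN1ge.trans hm)
  have h3 := hbound N1 hN1ge
  omega

lemma injOn_drop_rsp {N1 : ℕ}
    (hcard : ∀ m, N1 ≤ m → (rsp L m).card = (rsp L N1).card)
    (hsurj : ∀ n, N1 ≤ n → ∀ w ∈ rsp L n, ∃ a, a :: w ∈ rsp L (n + 1)) :
    ∀ m, N1 ≤ m → ∀ w1 ∈ rsp L m, ∀ w2 ∈ rsp L m,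
      w1.drop (m - N1) = w2.drop (m - N1) → w1 = w2 := by
  intro m hm
  induction m, hm using Nat.le_induction with
  | base =>
    intro w1 _ w2 _ h
    simpa using h
  | succ m hm ih =>
    intro w1 hw1 w2 hw2 h
    have hd : ∀ w : List A, w.drop (m + 1 - N1) = w.tail.drop (m - N1) := by
      intro w
      rw [← List.drop_one, List.drop_drop]
      congr 1
      omega
    rw [hd w1, hd w2] at h
    have htails : w1.tail = w2.tail :=
      ih w1.tail (tail_mem_rsp L hL hw1) w2.tail (tail_mem_rsp L hL hw2) h
    have hinj := Finset.inj_on_of_surj_on_of_card_le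
      (s := rsp L (m + 1)) (t := rsp L m)
      (fun w _ => w.tail) (fun w hw => tail_mem_rsp L hL hw)
      (fun b hb => by
        obtain ⟨a, ha⟩ := hsurj m hm b hb
        exact ⟨a :: b, ha, rfl⟩)
      (by
        have h1 := hcard m hm
        have h2 := hcard (m + 1) (hm.trans (Nat.le_succ m))
        omega)
    exact hinj hw1 hw2 htails

end Counting

/-! ### The Koenig-style construction -/

lemma prefix_drop_prefix {w α : List A} (h : w <+: α) (i : ℕ) : w.drop i <+: α.drop i := by
  obtain ⟨t, rfl⟩ := h
  rcases le_or_gt i w.length with hi | hi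
  · rw [List.drop_append_of_le_length hi]
    exact List.prefix_append _ _
  · rw [List.drop_eq_nil_of_le hi.le]
    exact List.nil_prefix

/-- "Good" words: start with `v`, contain no other occurrence of `v`. -/
def GoodW (x : ℤ → A) (v α : List A) : Prop :=
  α ∈ FactorsZ x ∧ v <+: α ∧ ∀ i, 1 ≤ i → ¬ v <+: α.drop i

/-- Words all of whose extensions to arbitrarily long good words exist. -/
def PW (x : ℤ → A) (v w : List A) : Prop :=
  ∀ n : ℕ, ∃ α, GoodW x v α ∧ w <+: α ∧ n ≤ α.length

lemma pw_step [Fintype A] {x : ℤ → A} {v w : List A} (hP : PW x v w) :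
    ∃ a, PW x v (w ++ [a]) := by
  by_contra hcon
  push_neg at hcon
  have hna : ∀ a : A, ∃ n : ℕ, ¬ ∃ α, GoodW x v α ∧ (w ++ [a]) <+: α ∧ n ≤ α.length :=
    fun a => not_forall.1 (hcon a)
  choose nn hnn using hna
  obtain ⟨α, hGα, hpre, hlen⟩ := hP ((Finset.univ.sup nn) + w.length + 1)
  have hlt : w.length < α.length := by omega
  obtain ⟨a, ha⟩ : ∃ a, w ++ [a] <+: α := by
    obtain ⟨t, rfl⟩ := hpre
    cases t with
    | nil => simp at hlt
    | cons b t' => exact ⟨b, ⟨t', by simp⟩⟩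
  refine hnn a ⟨α, hGα, ha, ?_⟩
  have := Finset.le_sup (f := nn) (Finset.mem_univ a)
  omega

lemma exists_W [Fintype A] {x : ℤ → A} {v : List A} (hP0 : PW x v []) :
    ∃ W : ℕ → List A, W 0 = [] ∧ (∀ n, PW x v (W n)) ∧ (∀ n, ∃ a, W (n + 1) = W n ++ [a]) := by
  let g : {w : List A // PW x v w} → {w : List A // PW x v w} := fun p =>
    ⟨p.1 ++ [Classical.choose (pw_step p.2)], Classical.choose_spec (pw_step p.2)⟩
  refine ⟨fun n => (g^[n] ⟨[], hP0⟩).1, rfl, fun n => (g^[n] ⟨[], hP0⟩).2, fun n => ?_⟩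
  have h : g^[n + 1] ⟨[], hP0⟩ = g (g^[n] ⟨[], hP0⟩) := Function.iterate_succ_apply' g n _
  exact ⟨_, congrArg Subtype.val h⟩

/-- Construction of arbitrarily long good words. -/
lemma exists_good {x : ℤ → A} (hrr : RightRec x) {v : List A} (hv : v ∈ FactorsZ x)
    (hvne : v ≠ [])
    (hbad : ∀ n : ℕ, ∃ u ∈ FactorsZ x, u.length = n ∧ ¬ v <:+: u) :
    ∀ n : ℕ, ∃ α, GoodW x v α ∧ n ≤ α.length := by
  intro n
  have hv1 : 1 ≤ v.length := List.length_pos_iff.2 hvne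
  obtain ⟨u, hu, hulen, hnv⟩ := hbad (n + v.length)
  obtain ⟨p₀, hp₀⟩ := hv
  obtain ⟨q, hq, hqu⟩ := hrr u hu p₀
  have hqu' : win x q u.length = u := hqu
  have hp₀' : win x p₀ v.length = v := hp₀
  set B : ℤ := q + (n : ℤ) with hB
  obtain ⟨p', ⟨hp'1, hp'2, hp'occ⟩, hp'max⟩ := Int.exists_greatest_of_bdd
    (P := fun z : ℤ => p₀ ≤ z ∧ z ≤ B ∧ occursAtZ x z v)
    ⟨B, fun z hz => hz.2.1⟩ ⟨p₀, le_rfl, by omega, hp₀⟩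
  have hp'v : win x p' v.length = v := hp'occ
  -- the greatest occurrence of `v` before the `u`-window is before `q`
  have hp'q : p' < q := by
    by_contra hcon
    push_neg at hcon
    apply hnv
    set j : ℕ := (p' - q).toNat with hj
    have h1 : (win x q u.length).drop j = win x p' (u.length - j) := by
      rw [drop_win x q (by omega : j ≤ u.length)]
      congr 1
      omega
    have h2 : (win x p' (u.length - j)).take v.length = win x p' v.length :=
      take_win x p' (by omega)
    have hveq : v = (u.drop j).take v.length := by
      rw [← hqu', h1, h2, hp'v]
    rw [hveq]
    exact ((List.take_prefix _ _).isInfix).trans (List.drop_suffix j u).isInfix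
  set K : ℕ := (q - p').toNat + (n + v.length) with hK
  refine ⟨win x p' K, ⟨win_mem_factorsZ x p' K, ?_, ?_⟩, by rw [win_length]; omega⟩
  · rw [← hp'v]
    exact prefix_win x p' (by omega)
  · intro i hi hvp
    have hKi : v.length ≤ K - i := by
      have := hvp.length_le
      rw [List.length_drop, win_length] at this
      omega
    have hiK : i ≤ K := by omega
    rw [drop_win x p' hiK] at hvp
    have hocc : win x (p' + (i : ℤ)) v.length = v :=
      (List.prefix_of_prefix_length_le (prefix_win x _ hKi) hvp
        (le_of_eq (win_length x _ v.length))).eq_of_length (win_length x _ v.length)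
    have hmem : p₀ ≤ p' + (i : ℤ) ∧ p' + (i : ℤ) ≤ B ∧ occursAtZ x (p' + (i : ℤ)) v := by
      refine ⟨by omega, by omega, ?_⟩
      rw [occursAtZ_iff]
      exact hocc
    have := hp'max _ hmem
    omega

/-- Main lemma: uniform recurrence of the factor language. -/
theorem unifRec [Fintype A] {L : Set (List A)} (hL : IsLanguage L)
    (hns : ∀ w : List A, ¬ StrongBispecial L w)
    {x : ℤ → A} (hx : x ∈ XL L) (hrr : RightRec x) :
    UniformlyRecurrent (FactorsZ x) := by
  intro v hv
  by_contra hbad0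
  push_neg at hbad0
  have hvne : v ≠ [] := by
    rintro rfl
    obtain ⟨u, -, -, hn⟩ := hbad0 0
    exact hn (List.nil_infix)
  have hML : FactorsZ x ⊆ L := factorsZ_subset hx
  have hgood := exists_good hrr hv hvne hbad0
  have hP0 : PW x v [] := fun n => by
    obtain ⟨α, h1, h2⟩ := hgood n
    exact ⟨α, h1, List.nil_prefix, h2⟩
  obtain ⟨W, hW0, hWP, hWsucc⟩ := exists_W hP0
  have hWlen : ∀ n, (W n).length = n := by
    intro n
    induction n with
    | zero => rw [hW0]; rfl
    | succ n ih =>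
      obtain ⟨a, ha⟩ := hWsucc n
      rw [ha]
      simp [ih]
  have hWM : ∀ m, W m ∈ FactorsZ x := by
    intro m
    obtain ⟨α, hGα, hpre, -⟩ := hWP m 0
    exact infix_mem_factorsZ hGα.1 hpre.isInfix
  have hWv : ∀ m, v.length ≤ m → v <+: W m := by
    intro m hm
    obtain ⟨α, hGα, hpre, -⟩ := hWP m 0
    exact List.prefix_of_prefix_length_le hGα.2.1 hpre (by rw [hWlen]; exact hm)
  have hWnov : ∀ m i, 1 ≤ i → ¬ v <+: (W m).drop i := by
    intro m i hi hvp
    obtain ⟨α, hGα, hpre, -⟩ := hWP m 0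
    exact hGα.2.2 i hi (hvp.trans (prefix_drop_prefix hpre i))
  -- infinitely many prefixes are right special
  have hrs : ∀ n, ∃ m, n ≤ m ∧ W m ∈ rsp L m := by
    intro n
    by_contra hcon
    push_neg at hcon
    have huniq : ∀ m, n ≤ m → ∀ b c : A, W m ++ [b] ∈ L → W m ++ [c] ∈ L → b = c := by
      intro m hm b c hb hc
      have hWlvl : W m ∈ lvl L m := (mem_lvl L).2 ⟨hML (hWM m), hWlen m⟩
      have hnot : ¬ 2 ≤ (depF L (W m)).card := fun h =>
        (hcon m hm) (Finset.mem_filter.2 ⟨hWlvl, h⟩)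
      by_contra hbc
      exact hnot (Finset.one_lt_card.2
        ⟨b, (mem_depF L).2 hb, c, (mem_depF L).2 hc, hbc⟩)
    obtain ⟨q, hq⟩ := hWM n
    have hq' : win x q n = W n := by
      have h := hq
      rw [occursAtZ_iff, hWlen n] at h
      exact h
    have hwin : ∀ k, win x q (n + k) = W (n + k) := by
      intro k
      induction k with
      | zero => exact hq'
      | succ k ih =>
        obtain ⟨a, ha⟩ := hWsucc (n + k)
        have h1 : win x q ((n + k) + 1) = win x q (n + k) ++ [x (q + ((n + k : ℕ) : ℤ))] :=
          win_succ x q (n + k)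
        have h3 : W (n + k) ++ [a] ∈ L := hML (by rw [← ha]; exact hWM _)
        have h4 : W (n + k) ++ [x (q + ((n + k : ℕ) : ℤ))] ∈ L := by
          rw [← ih, ← h1]
          exact hML (win_mem_factorsZ _ _ _)
        have hbc := huniq (n + k) (Nat.le_add_right n k) _ _ h4 h3
        show win x q ((n + k) + 1) = W ((n + k) + 1)
        rw [h1, ih, hbc, ← ha]
    obtain ⟨t, ht, hocc⟩ := hrr v hv (q + 1)
    set i : ℕ := (t - q).toNat with hi
    have hi1 : 1 ≤ i := by omega
    have hi2 : (t : ℤ) = q + (i : ℤ) := by omega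
    apply hWnov (n + (i + v.length)) i hi1
    rw [← hwin (i + v.length), drop_win x q (by omega : i ≤ n + (i + v.length))]
    have hocc' : win x (q + (i : ℤ)) v.length = v := by
      rw [← hi2]
      exact hocc
    have hpw : win x (q + (i : ℤ)) v.length <+: win x (q + (i : ℤ)) (n + (i + v.length) - i) :=
      prefix_win x _ (by omega)
    rwa [hocc'] at hpw
  -- chain structure of right special words
  obtain ⟨N1, hcard, hsurjc⟩ := chain_data L hL hns
  set B : ℕ := max N1 v.length with hBdef
  obtain ⟨f, hfge, hflt, hfrs⟩ :
      ∃ f : ℕ → ℕ, (∀ k, B ≤ f k) ∧ (∀ k, f k < f (k + 1)) ∧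
        (∀ k, W (f k) ∈ rsp L (f k)) := by
    choose φ hφ1 hφ2 using hrs
    refine ⟨fun k => (fun p => φ (p + 1))^[k] (φ B), ?_, ?_, ?_⟩
    · intro k
      dsimp only
      induction k with
      | zero => simpa using hφ1 B
      | succ k ih =>
        rw [Function.iterate_succ_apply']
        have := hφ1 ((fun p => φ (p + 1))^[k] (φ B) + 1)
        omega
    · intro k
      dsimp only
      rw [Function.iterate_succ_apply']
      have := hφ1 ((fun p => φ (p + 1))^[k] (φ B) + 1)
      omega
    · intro k
      dsimp only
      cases k with
      | zero => simpa using hφ2 B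
      | succ k =>
        rw [Function.iterate_succ_apply']
        exact hφ2 _
  -- pigeonhole on the labels
  classical
  obtain ⟨k1, -, k2, -, hk12, heq⟩ :=
    Finset.exists_ne_map_eq_of_card_lt_of_maps_to
      (s := (Finset.univ : Finset (Fin ((rsp L N1).card + 1))))
      (t := rsp L N1)
      (f := fun k => (W (f k)).drop (f k - N1))
      (by simp)
      (fun k _ => by
        have h := hfrs k
        have hge : N1 ≤ f (k : ℕ) := le_trans (le_max_left _ _) (hfge k)
        have hsplit : f (k : ℕ) = N1 + (f (k : ℕ) - N1) := by omega
        exact drop_mem_rsp L hL _ _ _ (by rw [← hsplit]; exact h))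
  -- produce two comparable right special prefixes with the same label
  have hmain : ∀ m1 m2 : ℕ, m1 < m2 → B ≤ m1 → B ≤ m2 →
      W m1 ∈ rsp L m1 → W m2 ∈ rsp L m2 →
      (W m1).drop (m1 - N1) = (W m2).drop (m2 - N1) → False := by
    intro m1 m2 hm12 hm1B hm2B hrs1 hrs2 hlab
    have hD : (W m2).drop (m2 - m1) ∈ rsp L m1 :=
      drop_mem_rsp L hL (m2 - m1) m1 _
        (by rw [show m1 + (m2 - m1) = m2 by omega]; exact hrs2)
    have hDlab : ((W m2).drop (m2 - m1)).drop (m1 - N1) = (W m1).drop (m1 - N1) := by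
      rw [List.drop_drop]
      have hN1m1 : N1 ≤ m1 := le_trans (le_max_left _ _) hm1B
      rw [show m2 - m1 + (m1 - N1) = m2 - N1 by omega]
      exact hlab.symm
    have hDeq : (W m2).drop (m2 - m1) = W m1 :=
      injOn_drop_rsp L hL hcard hsurjc m1 (le_trans (le_max_left _ _) hm1B)
        _ hD _ hrs1 hDlab
    apply hWnov m2 (m2 - m1) (by omega)
    rw [hDeq]
    exact hWv m1 (le_trans (le_max_right _ _) hm1B)
  have hmono : StrictMono f := strictMono_nat_of_lt_succ hflt
  rcases lt_or_gt_of_ne hk12 with h | h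
  · exact hmain (f k1) (f k2) (hmono (by exact_mod_cast h)) (hfge k1) (hfge k2)
      (hfrs k1) (hfrs k2) heq
  · exact hmain (f k2) (f k1) (hmono (by exact_mod_cast h)) (hfge k2) (hfge k1)
      (hfrs k2) (hfrs k1) heq.symm

end S12



/-- without strong bispecials, a right recurrent bi-infinite
sequence of `X_L` is also left recurrent, and its language of factors is
uniformly recurrent. -/
theorem stmt12 [Fintype A] (L : Set (List A)) (hL : IsLanguage L)
    (hns : ∀ w : List A, ¬ StrongBispecial L w)
    (x : ℤ → A) (hx : x ∈ XL L) (hrr : RightRec x) :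
    LeftRec x ∧ UniformlyRecurrent (FactorsZ x) := by
  have hUR : UniformlyRecurrent (FactorsZ x) := S12.unifRec hL hns hx hrr
  refine ⟨?_, hUR⟩
  intro w hw N
  obtain ⟨n, hn⟩ := hUR w hw
  have hu : S12.win x (N - n) n ∈ FactorsZ x := S12.win_mem_factorsZ x (N - n) n
  have hinf : w <:+: S12.win x (N - n) n := hn _ hu (S12.win_length x _ n)
  obtain ⟨j, hj, hocc⟩ := S12.occursAtZ_of_infix (S12.occursAtZ_win x (N - n) n) hinf
  refine ⟨N - n + j, ?_, hocc⟩
  rw [S12.win_length] at hj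
  omega
end

section
/- Suppose the language L has no strong bispecial word. Then for every x ∈ X_L there exists m ∈ ℕ such that the infinite suffix (x_n)_{n ≥ m} is right recurrent and the infinite prefix (x_n)_{n ≤ -m} is left recurrent. -/
open List Set

variable {A : Type*}

variable {F : Finset A}

/-! ### Auxiliary development for Statement 13 -/

namespace Stmt13Aux

open Finset

/-- The block of `x` of length `n` starting at position `q`. -/
def blk (x : ℤ → A) (q : ℤ) (n : ℕ) : List A := List.ofFn fun i : Fin n => x (q + (i : ℕ))

@[simp] lemma blk_length (x : ℤ → A) (q : ℤ) (n : ℕ) : (blk x q n).length = n := by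
  simp [blk]

lemma blk_getElem (x : ℤ → A) (q : ℤ) (n : ℕ) (i : ℕ) (h : i < n) :
    (blk x q n)[i]'(by simpa using h) = x (q + i) := by
  simp [blk]

lemma blk_add (x : ℤ → A) (q : ℤ) (a b : ℕ) :
    blk x q (a + b) = blk x q a ++ blk x (q + a) b := by
  apply List.ext_getElem (by simp)
  intro i h1 h2
  simp only [blk, List.getElem_ofFn, List.getElem_append, List.length_ofFn]
  split_ifs with h
  · norm_num
  · congr 1
    omega

lemma blk_succ (x : ℤ → A) (q : ℤ) (n : ℕ) :
    blk x q (n + 1) = blk x q n ++ [x (q + n)] := by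
  rw [blk_add]
  congr 1
  · simp [blk, List.ofFn_succ]

lemma blk_drop (x : ℤ → A) (q : ℤ) (n d : ℕ) (h : d ≤ n) :
    (blk x q n).drop d = blk x (q + d) (n - d) := by
  conv_lhs => rw [show n = d + (n - d) by omega, blk_add]
  rw [List.drop_left' (by simp)]

lemma occursAtZ_iff_blk {x : ℤ → A} {m : ℤ} {w : List A} :
    occursAtZ x m w ↔ blk x m w.length = w := Iff.rfl

lemma occursAtZ_blk (x : ℤ → A) (q : ℤ) (n : ℕ) : occursAtZ x q (blk x q n) := by
  rw [occursAtZ_iff_blk, blk_length]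

lemma blk_mem {L : Set (List A)} {x : ℤ → A} (hx : x ∈ XL L) (q : ℤ) (n : ℕ) :
    blk x q n ∈ L := hx q n

lemma mem_of_occursAtZ {L : Set (List A)} {x : ℤ → A} (hx : x ∈ XL L) {q : ℤ} {w : List A}
    (h : occursAtZ x q w) : w ∈ L := by
  rw [occursAtZ_iff_blk] at h
  exact h ▸ blk_mem hx q w.length

lemma occursAtZ_getElem {x : ℤ → A} {m : ℤ} {w : List A} :
    occursAtZ x m w ↔ ∀ (i : ℕ) (h : i < w.length), w[i] = x (m + i) := by
  rw [occursAtZ_iff_blk]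
  constructor
  · intro hb i h
    have h1 : i < (blk x m w.length).length := by simpa using h
    have h2 := List.getElem_of_eq hb h1
    rw [← h2, blk_getElem x m w.length i (by simpa using h)]
  · intro h
    apply List.ext_getElem (by simp)
    intro i h1 h2
    rw [blk_getElem x m w.length i (by simpa using h1)]
    exact (h i h2).symm

lemma occursAtZ_middle {x : ℤ → A} {q : ℤ} {s v t : List A}
    (h : occursAtZ x q (s ++ v ++ t)) : occursAtZ x (q + s.length) v := by
  rw [occursAtZ_iff_blk] at h
  rw [List.append_assoc] at h
  have hlen : (s ++ (v ++ t)).length = s.length + (v.length + t.length) := by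
    simp
  rw [hlen, blk_add, blk_add] at h
  obtain ⟨-, h2⟩ := List.append_inj h (by simp)
  obtain ⟨h3, -⟩ := List.append_inj h2 (by simp)
  exact h3

/-- Words occurring at arbitrarily large positions in `x`. -/
def InfOccR (x : ℤ → A) : Set (List A) :=
  {w | ∀ N : ℤ, ∃ q : ℤ, N ≤ q ∧ occursAtZ x q w}

lemma not_infOccR {x : ℤ → A} {w : List A} :
    w ∉ InfOccR x ↔ ∃ N : ℤ, ∀ q : ℤ, N ≤ q → ¬ occursAtZ x q w := by
  simp only [InfOccR, Set.mem_setOf_eq]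
  push_neg
  rfl

lemma infOccR_nil {x : ℤ → A} : ([] : List A) ∈ InfOccR x := by
  intro N
  exact ⟨N, le_refl N, by simp [occursAtZ]⟩

lemma infOccR_infix {x : ℤ → A} {v w : List A} (hw : w ∈ InfOccR x) (hv : v <:+: w) :
    v ∈ InfOccR x := by
  obtain ⟨s, t, rfl⟩ := hv
  intro N
  obtain ⟨q, hq, ho⟩ := hw N
  refine ⟨q + s.length, by omega, occursAtZ_middle ho⟩

end Stmt13Aux
namespace Stmt13Aux

open Finset

variable [Fintype A]

noncomputable def arrF (L : Set (List A)) (w : List A) : Finset A :=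
  (Set.toFinite (arrSet L w)).toFinset

noncomputable def depF (L : Set (List A)) (w : List A) : Finset A :=
  (Set.toFinite (depSet L w)).toFinset

noncomputable def extF (L : Set (List A)) (w : List A) : Finset (A × A) :=
  (Set.toFinite {p : A × A | p.1 :: (w ++ [p.2]) ∈ L}).toFinset

noncomputable def LnF (L : Set (List A)) (n : ℕ) : Finset (List A) :=
  (((List.finite_length_eq A n).subset (fun w hw => hw.2)) :
    Set.Finite {w : List A | w ∈ L ∧ w.length = n}).toFinset

lemma mem_arrF {L : Set (List A)} {w : List A} {a : A} : a ∈ arrF L w ↔ a :: w ∈ L := by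
  simp [arrF, Set.Finite.mem_toFinset, arrSet]

lemma mem_depF {L : Set (List A)} {w : List A} {a : A} : a ∈ depF L w ↔ w ++ [a] ∈ L := by
  simp [depF, Set.Finite.mem_toFinset, depSet]

lemma mem_extF {L : Set (List A)} {w : List A} {p : A × A} :
    p ∈ extF L w ↔ p.1 :: (w ++ [p.2]) ∈ L := by
  simp [extF, Set.Finite.mem_toFinset]

lemma mem_LnF {L : Set (List A)} {n : ℕ} {w : List A} :
    w ∈ LnF L n ↔ w ∈ L ∧ w.length = n := by
  simp [LnF, Set.Finite.mem_toFinset]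

lemma arr_ncard {L : Set (List A)} (w : List A) : (arrSet L w).ncard = (arrF L w).card :=
  Set.ncard_eq_toFinset_card _ _

lemma dep_ncard {L : Set (List A)} (w : List A) : (depSet L w).ncard = (depF L w).card :=
  Set.ncard_eq_toFinset_card _ _

lemma ext_ncard {L : Set (List A)} (w : List A) : extCount L w = (extF L w).card :=
  Set.ncard_eq_toFinset_card _ _

variable {L : Set (List A)}

lemma arrF_nonempty (hL : IsLanguage L) {w : List A} (hw : w ∈ L) : (arrF L w).Nonempty := by
  obtain ⟨a, ha⟩ := hL.2.1 w hw
  exact ⟨a, mem_arrF.mpr ha⟩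

lemma depF_nonempty (hL : IsLanguage L) {w : List A} (hw : w ∈ L) : (depF L w).Nonempty := by
  obtain ⟨a, ha⟩ := hL.2.2 w hw
  exact ⟨a, mem_depF.mpr ha⟩

lemma depF_cons_subset (hL : IsLanguage L) (a : A) (w : List A) :
    depF L (a :: w) ⊆ depF L w := by
  intro b hb
  rw [mem_depF] at hb ⊢
  exact hL.1 _ hb _ ⟨[a], [], by simp⟩

lemma arrF_concat_subset (hL : IsLanguage L) (b : A) (w : List A) :
    arrF L (w ++ [b]) ⊆ arrF L w := by
  intro a ha
  rw [mem_arrF] at ha ⊢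
  exact hL.1 _ ha _ ⟨[], [b], by simp⟩

noncomputable def pF (L : Set (List A)) (n : ℕ) : ℕ := (LnF L n).card

lemma I1 (hL : IsLanguage L) (n : ℕ) :
    pF L (n + 1) = ∑ w ∈ LnF L n, (depF L w).card := by
  classical
  rw [pF, Finset.card_eq_sum_card_fiberwise
    (f := fun w => List.dropLast w) (t := LnF L n) ?hmaps]
  case hmaps =>
    intro w hw
    rw [Finset.mem_coe, mem_LnF] at hw ⊢
    refine ⟨hL.1 _ hw.1 _ (List.dropLast_prefix w).isInfix, by simp [hw.2]⟩
  apply Finset.sum_congr rfl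
  intro w hw
  rw [mem_LnF] at hw
  symm
  apply Finset.card_bij (i := fun b _ => w ++ [b])
  · intro b hb
    rw [Finset.mem_filter, mem_LnF]
    exact ⟨⟨mem_depF.mp hb, by simp [hw.2]⟩, by simp⟩
  · intro b1 h1 b2 h2 he
    have := List.append_cancel_left he
    simpa using this
  · intro w' hw'
    rw [Finset.mem_filter, mem_LnF] at hw'
    have hne : w' ≠ [] := by
      intro h
      rw [h] at hw'
      simp at hw'
    refine ⟨w'.getLast hne, ?_, ?_⟩
    · rw [mem_depF, ← hw'.2, List.dropLast_append_getLast hne]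
      exact hw'.1.1
    · rw [← hw'.2, List.dropLast_append_getLast hne]

lemma I2 (hL : IsLanguage L) (n : ℕ) :
    pF L (n + 1) = ∑ w ∈ LnF L n, (arrF L w).card := by
  classical
  rw [pF, Finset.card_eq_sum_card_fiberwise
    (f := fun w => List.tail w) (t := LnF L n) ?hmaps]
  case hmaps =>
    intro w hw
    rw [Finset.mem_coe, mem_LnF] at hw ⊢
    refine ⟨hL.1 _ hw.1 _ (List.tail_suffix w).isInfix, by simp [hw.2]⟩
  apply Finset.sum_congr rfl
  intro w hw
  rw [mem_LnF] at hw
  symm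
  apply Finset.card_bij (i := fun a _ => a :: w)
  · intro a ha
    rw [Finset.mem_filter, mem_LnF]
    exact ⟨⟨mem_arrF.mp ha, by simp [hw.2]⟩, by simp⟩
  · intro a1 h1 a2 h2 he
    simpa using he
  · intro w' hw'
    rw [Finset.mem_filter, mem_LnF] at hw'
    have hne : w' ≠ [] := by
      intro h
      rw [h] at hw'
      simp at hw'
    refine ⟨w'.head hne, ?_, ?_⟩
    · rw [mem_arrF, ← hw'.2, List.cons_head_tail]
      exact hw'.1.1
    · rw [← hw'.2, List.cons_head_tail]

lemma I3 (hL : IsLanguage L) (n : ℕ) :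
    pF L (n + 2) = ∑ w ∈ LnF L n, (extF L w).card := by
  classical
  rw [pF, Finset.card_eq_sum_card_fiberwise
    (f := fun w => w.tail.dropLast) (t := LnF L n) ?hmaps]
  case hmaps =>
    intro w hw
    rw [Finset.mem_coe, mem_LnF] at hw ⊢
    constructor
    · refine hL.1 _ hw.1 _ ?_
      exact ((List.dropLast_prefix w.tail).isInfix).trans (List.tail_suffix w).isInfix
    · simp [hw.2]
  apply Finset.sum_congr rfl
  intro w hw
  rw [mem_LnF] at hw
  symm
  apply Finset.card_bij (i := fun p _ => p.1 :: (w ++ [p.2]))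
  · intro p hp
    rw [Finset.mem_filter, mem_LnF]
    refine ⟨⟨mem_extF.mp hp, by simp [hw.2]⟩, by simp⟩
  · intro p1 h1 p2 h2 he
    have h12 : p1.1 = p2.1 ∧ p1.2 = p2.2 := by simpa using he
    exact Prod.ext h12.1 h12.2
  · intro w' hw'
    rw [Finset.mem_filter, mem_LnF] at hw'
    have hne : w' ≠ [] := by
      intro h
      rw [h] at hw'
      simp at hw'
    have hne2 : w'.tail ≠ [] := by
      have := hw'.1.2
      intro h
      rw [← List.cons_head_tail hne, h] at this
      simp at this
    refine ⟨(w'.head hne, w'.tail.getLast hne2), ?_, ?_⟩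
    · rw [mem_extF]
      have : w ++ [w'.tail.getLast hne2] = w'.tail := by
        rw [← hw'.2, List.dropLast_append_getLast hne2]
      simp only [this]
      rw [List.cons_head_tail]
      exact hw'.1.1
    · have : w ++ [w'.tail.getLast hne2] = w'.tail := by
        rw [← hw'.2, List.dropLast_append_getLast hne2]
      simp only [this]
      rw [List.cons_head_tail]

lemma I4 (hL : IsLanguage L) (w : List A) :
    (extF L w).card = ∑ a ∈ arrF L w, (depF L (a :: w)).card := by
  classical
  rw [Finset.card_eq_sum_card_fiberwise (f := fun p => p.1) (t := arrF L w) ?hmaps]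
  case hmaps =>
    intro p hp
    rw [Finset.mem_coe, mem_extF] at hp
    rw [Finset.mem_coe, mem_arrF]
    exact hL.1 _ hp _ ⟨[], [p.2], by simp⟩
  apply Finset.sum_congr rfl
  intro a ha
  symm
  apply Finset.card_bij (i := fun b _ => (a, b))
  · intro b hb
    rw [Finset.mem_filter, mem_extF]
    rw [mem_depF] at hb
    exact ⟨by simpa using hb, rfl⟩
  · intro b1 h1 b2 h2 he
    simpa using he
  · intro p hp
    rw [Finset.mem_filter, mem_extF] at hp
    refine ⟨p.2, ?_, ?_⟩
    · rw [mem_depF]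
      have := hp.1
      rw [hp.2] at this
      simpa using this
    · rw [← hp.2]

lemma I4' (hL : IsLanguage L) (w : List A) :
    (extF L w).card = ∑ b ∈ depF L w, (arrF L (w ++ [b])).card := by
  classical
  rw [Finset.card_eq_sum_card_fiberwise (f := fun p => p.2) (t := depF L w) ?hmaps]
  case hmaps =>
    intro p hp
    rw [Finset.mem_coe, mem_extF] at hp
    rw [Finset.mem_coe, mem_depF]
    exact hL.1 _ hp _ ⟨[p.1], [], by simp⟩
  apply Finset.sum_congr rfl
  intro b hb
  symm
  apply Finset.card_bij (i := fun a _ => (a, b))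
  · intro a ha
    rw [Finset.mem_filter, mem_extF]
    rw [mem_arrF] at ha
    exact ⟨by simpa using ha, rfl⟩
  · intro a1 h1 a2 h2 he
    simpa using he
  · intro p hp
    rw [Finset.mem_filter, mem_extF] at hp
    refine ⟨p.1, ?_, ?_⟩
    · rw [mem_arrF]
      have := hp.1
      rw [hp.2] at this
      simpa using this
    · rw [← hp.2]

lemma star (hL : IsLanguage L) (hns : ∀ w : List A, ¬ StrongBispecial L w)
    {w : List A} (hw : w ∈ L) :
    (extF L w).card + 1 ≤ (arrF L w).card + (depF L w).card := by
  have harr : 1 ≤ (arrF L w).card := Finset.card_pos.mpr (arrF_nonempty hL hw)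
  have hdep : 1 ≤ (depF L w).card := Finset.card_pos.mpr (depF_nonempty hL hw)
  rcases le_or_gt (arrF L w).card 1 with hA | hA
  · have : (extF L w).card ≤ (depF L w).card := by
      rw [I4 hL w]
      calc ∑ a ∈ arrF L w, (depF L (a :: w)).card
          ≤ ∑ _a ∈ arrF L w, (depF L w).card :=
            Finset.sum_le_sum (fun a _ => Finset.card_le_card (depF_cons_subset hL a w))
        _ = (arrF L w).card * (depF L w).card := by rw [Finset.sum_const, smul_eq_mul]
        _ ≤ 1 * (depF L w).card := Nat.mul_le_mul_right _ hA
        _ = (depF L w).card := one_mul _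
    omega
  · rcases le_or_gt (depF L w).card 1 with hD | hD
    · have : (extF L w).card ≤ (arrF L w).card := by
        rw [I4' hL w]
        calc ∑ b ∈ depF L w, (arrF L (w ++ [b])).card
            ≤ ∑ _b ∈ depF L w, (arrF L w).card :=
              Finset.sum_le_sum (fun b _ => Finset.card_le_card (arrF_concat_subset hL b w))
          _ = (depF L w).card * (arrF L w).card := by rw [Finset.sum_const, smul_eq_mul]
          _ ≤ 1 * (arrF L w).card := Nat.mul_le_mul_right _ hD
          _ = (arrF L w).card := one_mul _
      omega
    · have hbi : Bispecial L w := by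
        constructor
        · rw [arr_ncard]; omega
        · rw [dep_ncard]; omega
      have := hns w
      rw [StrongBispecial] at this
      push_neg at this
      have hle := this hbi
      rw [arr_ncard, dep_ncard, ext_ncard] at hle
      omega

lemma pF_mono (hL : IsLanguage L) [Nonempty A] (n : ℕ) : pF L n ≤ pF L (n + 1) := by
  classical
  apply Finset.card_le_card_of_injOn
    (f := fun w => w ++ [if h : w ∈ L then (hL.2.2 w h).choose else Classical.arbitrary A])
  · intro w hw
    rw [Finset.mem_coe, mem_LnF] at hw ⊢
    simp only [dif_pos hw.1]
    exact ⟨(hL.2.2 w hw.1).choose_spec, by simp [hw.2]⟩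
  · intro w1 _ w2 _ he
    have := congrArg List.dropLast he
    simpa using this

lemma key_ineq (hL : IsLanguage L) (hns : ∀ w : List A, ¬ StrongBispecial L w) (n : ℕ) :
    pF L (n + 2) + pF L n ≤ pF L (n + 1) + pF L (n + 1) := by
  have h1 : pF L (n + 2) + pF L n =
      ∑ w ∈ LnF L n, ((extF L w).card + 1) := by
    rw [Finset.sum_add_distrib, ← I3 hL n, Finset.sum_const, smul_eq_mul, mul_one]
    rfl
  have h2 : pF L (n + 1) + pF L (n + 1) =
      ∑ w ∈ LnF L n, ((arrF L w).card + (depF L w).card) := by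
    rw [Finset.sum_add_distrib, ← I2 hL n, ← I1 hL n]
  rw [h1, h2]
  exact Finset.sum_le_sum (fun w hw => star hL hns (mem_LnF.mp hw).1)

lemma nat_stabilize (f : ℕ → ℕ) (hf : ∀ n, f (n + 1) ≤ f n) :
    ∃ n0 : ℕ, ∀ n, n0 ≤ n → f n = f n0 := by
  have hanti : Antitone f := antitone_nat_of_succ_le hf
  obtain ⟨n0, hn0⟩ : sInf (Set.range f) ∈ Set.range f :=
    Nat.sInf_mem ⟨f 0, 0, rfl⟩
  refine ⟨n0, fun n hn => le_antisymm (hanti hn) ?_⟩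
  rw [hn0]
  exact Nat.sInf_le ⟨n, rfl⟩

end Stmt13Aux
namespace Stmt13Aux

open Finset

variable [Fintype A] {L : Set (List A)}

/-- Right special words of length `n`, as a finset. -/
noncomputable def RSF (L : Set (List A)) (n : ℕ) : Finset (List A) :=
  (LnF L n).filter (fun w => 2 ≤ (depF L w).card)

lemma mem_RSF {n : ℕ} {w : List A} :
    w ∈ RSF L n ↔ w ∈ L ∧ w.length = n ∧ 2 ≤ (depF L w).card := by
  simp [RSF, mem_LnF, and_assoc]

lemma tail_mem_RSF (hL : IsLanguage L) {n : ℕ} {w : List A} (hw : w ∈ RSF L (n + 1)) :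
    w.tail ∈ RSF L n := by
  rw [mem_RSF] at hw ⊢
  have hne : w ≠ [] := by
    intro h
    rw [h] at hw
    simp at hw
  refine ⟨hL.1 _ hw.1 _ (List.tail_suffix w).isInfix, by simp [hw.2.1], ?_⟩
  refine le_trans hw.2.2 (Finset.card_le_card ?_)
  have := depF_cons_subset hL (w.head hne) w.tail
  rwa [List.cons_head_tail] at this

/-- The combinatorial key: beyond some length `n2`, right special words form
disjoint chains determined by their length-`n2` suffix. -/
lemma keyRS [Nonempty A] (hL : IsLanguage L) (hns : ∀ w : List A, ¬ StrongBispecial L w) :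
    ∃ n2 : ℕ, ∀ (j j' : ℕ) (v v' : List A), n2 ≤ j → j ≤ j' →
      v ∈ L → v.length = j → 2 ≤ (depF L v).card →
      v' ∈ L → v'.length = j' → 2 ≤ (depF L v').card →
      v'.drop (j' - n2) = v.drop (j - n2) → v'.drop (j' - j) = v := by
  classical
  -- the complexity differences stabilize
  obtain ⟨n0, hn0⟩ := nat_stabilize (fun n => pF L (n + 1) - pF L n) (by
    intro n
    have := key_ineq hL hns n
    have h1 := pF_mono hL n
    have h2 := pF_mono hL (n + 1)
    have hr : pF L (n + 1 + 1) = pF L (n + 2) := rfl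
    omega)
  -- equality case of star for long words
  have star_eq : ∀ n, n0 ≤ n → ∀ w ∈ LnF L n,
      (extF L w).card + 1 = (arrF L w).card + (depF L w).card := by
    intro n hn
    have e0 := hn0 n hn
    have e1 := hn0 (n + 1) (by omega)
    have m0 := pF_mono hL n
    have m1 := pF_mono hL (n + 1)
    have hk := key_ineq hL hns n
    have e2 : pF L (n + 2) + pF L n = pF L (n + 1) + pF L (n + 1) := by
      have hr : pF L (n + 1 + 1) = pF L (n + 2) := rfl
      omega
    have h1 : ∑ w ∈ LnF L n, ((extF L w).card + 1) =
        ∑ w ∈ LnF L n, ((arrF L w).card + (depF L w).card) := by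
      rw [Finset.sum_add_distrib, ← I3 hL n, Finset.sum_const, smul_eq_mul, mul_one,
        Finset.sum_add_distrib, ← I2 hL n, ← I1 hL n]
      exact e2
    exact fun w hw => (Finset.sum_eq_sum_iff_of_le
      (fun w hw => star hL hns (mem_LnF.mp hw).1)).mp h1 w hw
  -- every long right special word extends on the left to a right special word
  have extend : ∀ n, n0 ≤ n → ∀ v ∈ RSF L n, ∃ a : A, a :: v ∈ RSF L (n + 1) := by
    intro n hn v hv
    rw [mem_RSF] at hv
    obtain ⟨hvL, hvlen, hvdep⟩ := hv
    have heq := star_eq n hn v (mem_LnF.mpr ⟨hvL, hvlen⟩)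
    rw [I4 hL v] at heq
    by_contra hno
    push_neg at hno
    have hle : ∀ a ∈ arrF L v, (depF L (a :: v)).card ≤ 1 := by
      intro a ha
      by_contra hgt
      push_neg at hgt
      exact hno a (mem_RSF.mpr ⟨mem_arrF.mp ha, by simp [hvlen], hgt⟩)
    have : ∑ a ∈ arrF L v, (depF L (a :: v)).card ≤ (arrF L v).card := by
      calc ∑ a ∈ arrF L v, (depF L (a :: v)).card ≤ ∑ _a ∈ arrF L v, 1 :=
        Finset.sum_le_sum hle
      _ = (arrF L v).card := by simp
    omega
  -- cardinalities of RSF are monotone (≥ n0) and bounded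
  have card_mono : ∀ n, n0 ≤ n → (RSF L n).card ≤ (RSF L (n + 1)).card := by
    intro n hn
    apply Finset.card_le_card_of_surjOn (fun w => w.tail)
    intro v hv
    rw [Finset.mem_coe] at hv
    obtain ⟨a, ha⟩ := extend n hn v hv
    exact ⟨a :: v, by simpa using ha, rfl⟩
  have card_bound : ∀ n, (RSF L n).card + pF L n ≤ pF L (n + 1) := by
    intro n
    rw [I1 hL n]
    have h1 : (RSF L n).card = ∑ w ∈ LnF L n, (if 2 ≤ (depF L w).card then 1 else 0) := by
      rw [RSF, Finset.card_filter]
    have h2 : pF L n = ∑ _w ∈ LnF L n, 1 := by simp [pF]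
    rw [h1, h2, ← Finset.sum_add_distrib]
    apply Finset.sum_le_sum
    intro w hw
    have hd : 1 ≤ (depF L w).card := Finset.card_pos.mpr (depF_nonempty hL (mem_LnF.mp hw).1)
    split_ifs with h
    · omega
    · omega
  -- stabilize the cardinality of RSF
  have hub : ∀ d : ℕ, (RSF L (n0 + d)).card ≤ pF L (n0 + 1) - pF L n0 := by
    intro d
    have hb := card_bound (n0 + d)
    have he := hn0 (n0 + d) (by omega)
    have m0 := pF_mono hL (n0 + d)
    omega
  obtain ⟨d0, hd0⟩ := nat_stabilize (fun d => (pF L (n0 + 1) - pF L n0) - (RSF L (n0 + d)).card)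
    (by
      intro d
      have := card_mono (n0 + d) (by omega)
      have hr : (RSF L (n0 + (d + 1))).card = (RSF L (n0 + d + 1)).card := rfl
      omega)
  have card_const : ∀ n, n0 + d0 ≤ n → (RSF L n).card = (RSF L (n0 + d0)).card := by
    intro n hn
    have h1 := hd0 (n - n0) (by omega)
    have h2 := hub (n - n0)
    have h3 := hub d0
    rw [show n0 + (n - n0) = n by omega] at h1 h2
    omega
  set n2 := n0 + d0 with hn2def
  -- single step injectivity above n2
  have inj1 : ∀ n, n2 ≤ n → ∀ v1 ∈ RSF L (n + 1), ∀ v2 ∈ RSF L (n + 1),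
      v1.tail = v2.tail → v1 = v2 := by
    intro n hn v1 h1 v2 h2 he
    have hsurj : ∀ b ∈ RSF L n, ∃ a, ∃ ha : a ∈ RSF L (n + 1), a.tail = b := by
      intro v hv
      obtain ⟨a, ha⟩ := extend n (by omega) v hv
      exact ⟨a :: v, ha, rfl⟩
    have hcard : (RSF L (n + 1)).card ≤ (RSF L n).card := by
      rw [card_const n hn, card_const (n + 1) (by omega)]
    exact Finset.inj_on_of_surj_on_of_card_le (fun a _ => a.tail)
      (fun a ha => tail_mem_RSF hL ha) hsurj hcard h1 h2 he
  -- iterated tail membership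
  have claimC : ∀ (d n : ℕ), ∀ v ∈ RSF L (n + d), v.drop d ∈ RSF L n := by
    intro d
    induction d with
    | zero => intro n v hv; simpa using hv
    | succ d ih =>
      intro n v hv
      have htail : v.tail ∈ RSF L (n + d) := by
        have : v ∈ RSF L ((n + d) + 1) := by rwa [show (n + d) + 1 = n + (d + 1) by omega]
        exact tail_mem_RSF hL this
      have hdd : v.tail.drop d = v.drop (d + 1) := by
        rw [← List.drop_one, List.drop_drop]
        congr 1
        omega
      have := ih n v.tail htail
      rwa [hdd] at this
  -- iterated injectivity above n2
  have claimB : ∀ (d n : ℕ), n2 ≤ n → ∀ v1 ∈ RSF L (n + d), ∀ v2 ∈ RSF L (n + d),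
      v1.drop d = v2.drop d → v1 = v2 := by
    intro d
    induction d with
    | zero => intro n _ v1 _ v2 _ h; simpa using h
    | succ d ih =>
      intro n hn v1 h1 v2 h2 he
      have h1' : v1 ∈ RSF L ((n + d) + 1) := by rwa [show (n + d) + 1 = n + (d + 1) by omega]
      have h2' : v2 ∈ RSF L ((n + d) + 1) := by rwa [show (n + d) + 1 = n + (d + 1) by omega]
      have hd1 : v1.tail.drop d = v1.drop (d + 1) := by
        rw [← List.drop_one, List.drop_drop]
        congr 1
        omega
      have hd2 : v2.tail.drop d = v2.drop (d + 1) := by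
        rw [← List.drop_one, List.drop_drop]
        congr 1
        omega
      have he' : v1.tail.drop d = v2.tail.drop d := by
        rw [hd1, hd2]
        exact he
      have := ih n hn v1.tail (tail_mem_RSF hL h1') v2.tail (tail_mem_RSF hL h2') he'
      exact inj1 (n + d) (by omega) v1 h1' v2 h2' this
  -- conclusion
  refine ⟨n2, fun j j' v v' hj hjj' hvL hvlen hvdep hv'L hv'len hv'dep hdrop => ?_⟩
  have hv : v ∈ RSF L j := mem_RSF.mpr ⟨hvL, hvlen, hvdep⟩
  have hv' : v' ∈ RSF L j' := mem_RSF.mpr ⟨hv'L, hv'len, hv'dep⟩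
  have hu : v'.drop (j' - j) ∈ RSF L j := by
    have : v' ∈ RSF L (j + (j' - j)) := by rwa [show j + (j' - j) = j' by omega]
    exact claimC (j' - j) j v' this
  have hud : (v'.drop (j' - j)).drop (j - n2) = v.drop (j - n2) := by
    rw [List.drop_drop, show j' - j + (j - n2) = j' - n2 by omega]
    exact hdrop
  have hvj : v ∈ RSF L (n2 + (j - n2)) := by rwa [show n2 + (j - n2) = j by omega]
  have huj : v'.drop (j' - j) ∈ RSF L (n2 + (j - n2)) := by
    rwa [show n2 + (j - n2) = j by omega]
  exact claimB (j - n2) n2 le_rfl _ huj v hvj hud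

end Stmt13Aux
namespace Stmt13Aux

open Finset

lemma exists_common_bound (x : ℤ → A) (s : Finset (List A))
    (h : ∀ w ∈ s, w ∉ InfOccR x) :
    ∃ N : ℤ, ∀ w ∈ s, ∀ q : ℤ, N ≤ q → ¬ occursAtZ x q w := by
  classical
  induction s using Finset.induction_on with
  | empty => exact ⟨0, by simp⟩
  | @insert a s hna ih =>
    obtain ⟨N1, h1⟩ := ih (fun w hw => h w (Finset.mem_insert_of_mem hw))
    obtain ⟨N2, h2⟩ := not_infOccR.mp (h a (Finset.mem_insert_self a s))
    refine ⟨max N1 N2, fun w hw q hq => ?_⟩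
    rcases Finset.mem_insert.mp hw with rfl | hw
    · exact h2 q (le_trans (le_max_right _ _) hq)
    · exact h1 w hw q (le_trans (le_max_left _ _) hq)

lemma exists_unbounded_fiber {β : Type*} (s : Finset β) (g : ℤ → β) (Q0 : ℤ)
    (hg : ∀ q : ℤ, Q0 ≤ q → g q ∈ s) :
    ∃ b : β, ∀ N : ℤ, ∃ q : ℤ, N ≤ q ∧ Q0 ≤ q ∧ g q = b := by
  classical
  by_contra hcon
  push_neg at hcon
  choose f hf using hcon
  have hne : s.Nonempty := ⟨g Q0, hg Q0 le_rfl⟩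
  set M : ℤ := s.sup' hne (fun b => f b) with hM
  set q : ℤ := max M Q0 with hq
  have hQ0q : Q0 ≤ q := le_max_right _ _
  have hb : g q ∈ s := hg q hQ0q
  have hfb : f (g q) ≤ M := Finset.le_sup' f hb
  exact hf (g q) q (le_trans hfb (le_max_left _ _)) hQ0q rfl

lemma main_right {A : Type*} [Fintype A] [Nonempty A] (L : Set (List A)) (hL : IsLanguage L)
    (hns : ∀ w : List A, ¬ StrongBispecial L w) (x : ℤ → A) (hx : x ∈ XL L) :
    ∃ m : ℕ, ∀ (w : List A) (k : ℤ), (m : ℤ) ≤ k → occursAtZ x k w →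
      ∀ N : ℤ, ∃ k' : ℤ, N ≤ k' ∧ occursAtZ x k' w := by
  classical
  by_contra hcon
  push_neg at hcon
  -- Step A: at every position some block is transient
  have stepA : ∀ q : ℤ, ∃ l : ℕ, blk x q l ∉ InfOccR x := by
    intro q
    obtain ⟨w, k, hk, hocc, N, hN⟩ := hcon q.toNat
    have hqk : q ≤ k := le_trans (Int.self_le_toNat q) hk
    refine ⟨(k - q).toNat + w.length, fun hInf => ?_⟩
    have hsplit : blk x q ((k - q).toNat + w.length)
        = blk x q (k - q).toNat ++ blk x (q + (k - q).toNat) w.length := blk_add x q _ _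
    have hqk2 : q + ((k - q).toNat : ℤ) = k := by omega
    rw [occursAtZ_iff_blk] at hocc
    rw [hqk2, hocc] at hsplit
    have : w ∈ InfOccR x :=
      infOccR_infix hInf ⟨blk x q (k - q).toNat, [], by rw [hsplit]; simp⟩
    exact (not_infOccR.mpr ⟨N, hN⟩) this
  -- the transition point kk
  have hkk : ∀ q : ℤ, ∃ k : ℕ, blk x q k ∈ InfOccR x ∧ blk x q (k + 1) ∉ InfOccR x := by
    intro q
    have h0 : blk x q 0 ∈ InfOccR x := by
      have : blk x q 0 = [] := by simp [blk]
      rw [this]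
      exact infOccR_nil
    have h1 : Nat.find (stepA q) ≠ 0 := by
      intro h
      exact (h ▸ Nat.find_spec (stepA q)) h0
    refine ⟨Nat.find (stepA q) - 1, ?_, ?_⟩
    · by_contra hno
      exact Nat.find_min (stepA q) (by omega) hno
    · rw [Nat.sub_add_cancel (by omega)]
      exact Nat.find_spec (stepA q)
  choose kk kk_mem kk_not using hkk
  -- Step C: kk tends to infinity
  have stepC : ∀ B : ℕ, ∃ Q : ℤ, ∀ q : ℤ, Q ≤ q → B ≤ kk q := by
    intro B
    obtain ⟨N, hN⟩ := exists_common_bound x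
      (((Finset.range (B + 2)).biUnion (fun n => (LnF L n).filter
        (fun w => w ∉ InfOccR x))))
      (by
        intro w hw
        simp only [Finset.mem_biUnion, Finset.mem_filter, Finset.mem_range] at hw
        obtain ⟨n, _, _, hw2⟩ := hw
        exact hw2)
    refine ⟨N, fun q hq => ?_⟩
    by_contra hB
    push_neg at hB
    have hmemT : blk x q (kk q + 1) ∈
        ((Finset.range (B + 2)).biUnion (fun n => (LnF L n).filter
          (fun w => w ∉ InfOccR x))) := by
      simp only [Finset.mem_biUnion, Finset.mem_filter, Finset.mem_range]
      exact ⟨kk q + 1, by omega, mem_LnF.mpr ⟨blk_mem hx q _, blk_length x q _⟩, kk_not q⟩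
    exact hN _ hmemT q hq (occursAtZ_blk x q (kk q + 1))
  -- Step D: the block at the transition point is right special
  have stepD : ∀ q : ℤ, 2 ≤ (depF L (blk x q (kk q))).card := by
    intro q
    obtain ⟨c, hc⟩ : ∃ c : A, blk x q (kk q) ++ [c] ∈ InfOccR x := by
      by_contra hno
      push_neg at hno
      have hbd : ∀ c : A, ∃ Nc : ℤ, ∀ r, Nc ≤ r → ¬ occursAtZ x r (blk x q (kk q) ++ [c]) :=
        fun c => not_infOccR.mp (hno c)
      choose f hf using hbd
      set M : ℤ := Finset.univ.sup' Finset.univ_nonempty f with hM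
      obtain ⟨r, hr, hro⟩ := kk_mem q M
      rw [occursAtZ_iff_blk, blk_length] at hro
      have hocc1 : occursAtZ x r (blk x q (kk q) ++ [x (r + kk q)]) := by
        have h2 : blk x r (kk q + 1) = blk x q (kk q) ++ [x (r + kk q)] := by
          rw [blk_succ, hro]
        rw [← h2]
        exact occursAtZ_blk x r (kk q + 1)
      exact hf (x (r + kk q)) r (le_trans (Finset.le_sup' f (Finset.mem_univ _)) hr) hocc1
    have hbL : blk x q (kk q) ++ [x (q + kk q)] ∈ L := by
      rw [← blk_succ]
      exact blk_mem hx q _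
    have hcL : blk x q (kk q) ++ [c] ∈ L := by
      obtain ⟨r, -, hro⟩ := hc 0
      exact mem_of_occursAtZ hx hro
    have hne : x (q + kk q) ≠ c := by
      intro h
      exact kk_not q (by rw [blk_succ, h]; exact hc)
    calc 2 = ({x (q + kk q), c} : Finset A).card := (Finset.card_pair hne).symm
      _ ≤ (depF L (blk x q (kk q))).card := by
          apply Finset.card_le_card
          intro b hb
          rcases Finset.mem_insert.mp hb with rfl | hb
          · exact mem_depF.mpr hbL
          · rw [Finset.mem_singleton] at hb
            subst hb
            exact mem_depF.mpr hcL
  -- combinatorial key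
  obtain ⟨n2, hkey⟩ := keyRS hL hns
  obtain ⟨Q0, hQ0⟩ := stepC n2
  -- the pigeonhole data
  obtain ⟨bp, hNbig⟩ := exists_unbounded_fiber ((LnF L n2) ×ˢ (Finset.univ : Finset A))
    (fun q => (blk x (q + ((kk q - n2 : ℕ) : ℤ)) n2, x (q + kk q))) Q0
    (fun q _ => by
      rw [Finset.mem_product]
      exact ⟨mem_LnF.mpr ⟨blk_mem hx _ _, blk_length x _ _⟩, Finset.mem_univ _⟩)
  obtain ⟨q0, -, hq0Q, hq0g⟩ := hNbig Q0
  obtain ⟨Nt, hNt⟩ := not_infOccR.mp (kk_not q0)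
  obtain ⟨Q1, hQ1⟩ := stepC (kk q0)
  obtain ⟨q1, hq1a, hq1Q, hq1g⟩ := hNbig (max Nt Q1)
  have hkk0 : n2 ≤ kk q0 := hQ0 q0 hq0Q
  have hkk1 : kk q0 ≤ kk q1 := hQ1 q1 (le_trans (le_max_right _ _) hq1a)
  have hn2q1 : n2 ≤ kk q1 := le_trans hkk0 hkk1
  -- first components and second components agree
  have hpair := hq1g.trans hq0g.symm
  rw [Prod.mk.injEq] at hpair
  obtain ⟨hfst, hsnd⟩ := hpair
  -- drops to level n2 agree
  have hdrop : (blk x q1 (kk q1)).drop (kk q1 - n2) = (blk x q0 (kk q0)).drop (kk q0 - n2) := by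
    rw [blk_drop x q1 (kk q1) (kk q1 - n2) (by omega),
      blk_drop x q0 (kk q0) (kk q0 - n2) (by omega),
      show kk q1 - (kk q1 - n2) = n2 by omega, show kk q0 - (kk q0 - n2) = n2 by omega]
    exact hfst
  -- apply the key
  have hmain : (blk x q1 (kk q1)).drop (kk q1 - kk q0) = blk x q0 (kk q0) :=
    hkey (kk q0) (kk q1) (blk x q0 (kk q0)) (blk x q1 (kk q1)) hkk0 hkk1
      (blk_mem hx _ _) (blk_length x _ _) (stepD q0)
      (blk_mem hx _ _) (blk_length x _ _) (stepD q1) hdrop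
  -- the transient word occurs far to the right: contradiction
  have hocc : occursAtZ x (q1 + ((kk q1 - kk q0 : ℕ) : ℤ)) (blk x q0 (kk q0 + 1)) := by
    have h1 : blk x (q1 + ((kk q1 - kk q0 : ℕ) : ℤ)) (kk q0 + 1)
        = blk x q0 (kk q0 + 1) := by
      have h2 : (blk x q1 (kk q1 + 1)).drop (kk q1 - kk q0)
          = blk x (q1 + ((kk q1 - kk q0 : ℕ) : ℤ)) (kk q0 + 1) := by
        rw [blk_drop x q1 (kk q1 + 1) (kk q1 - kk q0) (by omega)]
        congr 1
        omega
      rw [← h2, blk_succ, List.drop_append_of_le_length (by simp), hmain, hsnd,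
        ← blk_succ]
    rw [← h1]
    exact occursAtZ_blk x _ _
  exact hNt _ (by omega) hocc

end Stmt13Aux
namespace Stmt13Aux

lemma isLanguage_rev {L : Set (List A)} (hL : IsLanguage L) :
    IsLanguage {w : List A | w.reverse ∈ L} := by
  refine ⟨?_, ?_, ?_⟩
  · intro w hw v hv
    exact hL.1 _ hw _ (List.reverse_infix.mpr hv)
  · intro w hw
    obtain ⟨a, ha⟩ := hL.2.2 w.reverse hw
    exact ⟨a, by simpa [List.reverse_cons] using ha⟩
  · intro w hw
    obtain ⟨a, ha⟩ := hL.2.1 w.reverse hw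
    refine ⟨a, by simpa using ha⟩

lemma rev_aux (w : List A) (a b : A) :
    (a :: (w ++ [b])).reverse = b :: (w.reverse ++ [a]) := by
  simp

lemma sb_rev {L : Set (List A)} (hns : ∀ w : List A, ¬ StrongBispecial L w) :
    ∀ w : List A, ¬ StrongBispecial {w : List A | w.reverse ∈ L} w := by
  intro w hsb
  apply hns w.reverse
  have harr : arrSet {w : List A | w.reverse ∈ L} w = depSet L w.reverse := by
    ext a
    simp [arrSet, depSet, List.reverse_cons]
  have hdep : depSet {w : List A | w.reverse ∈ L} w = arrSet L w.reverse := by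
    ext a
    simp [arrSet, depSet]
  have hext : extCount {w : List A | w.reverse ∈ L} w = extCount L w.reverse := by
    unfold extCount
    have hseteq : {p : A × A | p.1 :: (w ++ [p.2]) ∈ {w : List A | w.reverse ∈ L}}
        = Prod.swap '' {p : A × A | p.1 :: (w.reverse ++ [p.2]) ∈ L} := by
      ext p
      simp only [Set.mem_setOf_eq, Set.mem_image, rev_aux]
      constructor
      · intro h
        exact ⟨(p.2, p.1), h, by simp⟩
      · rintro ⟨q, hq, rfl⟩
        simpa using hq
    rw [hseteq, Set.ncard_image_of_injective _ Prod.swap_injective]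
  obtain ⟨⟨h1, h2⟩, h3⟩ := hsb
  rw [harr] at h1 h3
  rw [hdep] at h2 h3
  rw [hext] at h3
  exact ⟨⟨h2, h1⟩, by omega⟩

lemma xrev_mem {L : Set (List A)} {x : ℤ → A} (hx : x ∈ XL L) :
    (fun n : ℤ => x (-n)) ∈ XL {w : List A | w.reverse ∈ L} := by
  intro m n
  show (List.ofFn fun i : Fin n => x (-(m + (i : ℕ)))).reverse ∈ L
  have : (List.ofFn fun i : Fin n => x (-(m + (i : ℕ)))).reverse = blk x (-m - n + 1) n := by
    apply List.ext_getElem (by simp)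
    intro i h1 h2
    rw [List.getElem_reverse]
    simp only [List.getElem_ofFn, List.length_ofFn]
    rw [blk_getElem x _ n i (by simpa using h2)]
    congr 1
    simp only [List.length_reverse, List.length_ofFn] at h1
    omega
  rw [this]
  exact blk_mem hx _ _

lemma occ_rev {x : ℤ → A} {k : ℤ} {w : List A} (h : occursAtZ x k w) :
    occursAtZ (fun n : ℤ => x (-n)) (-k - w.length + 1) w.reverse := by
  rw [occursAtZ_getElem] at h ⊢
  intro i hi
  have hi' : i < w.length := by simpa using hi
  rw [List.getElem_reverse]
  rw [h (w.length - 1 - i) (by omega)]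
  congr 1
  omega

end Stmt13Aux
/-- without strong bispecials, every `x ∈ X_L` has a right
recurrent infinite suffix `(x_n)_{n ≥ m}` and a left recurrent infinite prefix
`(x_n)_{n ≤ -m}`. -/
theorem stmt13 [Fintype A] (L : Set (List A)) (hL : IsLanguage L)
    (hns : ∀ w : List A, ¬ StrongBispecial L w)
    (x : ℤ → A) (hx : x ∈ XL L) :
    ∃ m : ℕ,
      (∀ (w : List A) (k : ℤ), (m : ℤ) ≤ k → occursAtZ x k w →
        ∀ N : ℤ, ∃ k' : ℤ, N ≤ k' ∧ occursAtZ x k' w) ∧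
      (∀ (w : List A) (k : ℤ), k + w.length ≤ -(m : ℤ) → occursAtZ x k w →
        ∀ N : ℤ, ∃ k' : ℤ, k' ≤ N ∧ occursAtZ x k' w) := by
  have hA : Nonempty A := ⟨x 0⟩
  obtain ⟨m1, h1⟩ := Stmt13Aux.main_right L hL hns x hx
  obtain ⟨m2, h2⟩ := Stmt13Aux.main_right {w : List A | w.reverse ∈ L}
    (Stmt13Aux.isLanguage_rev hL) (Stmt13Aux.sb_rev hns)
    (fun n : ℤ => x (-n)) (Stmt13Aux.xrev_mem hx)
  refine ⟨max m1 m2, ?_, ?_⟩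
  · intro w k hk
    exact h1 w k (le_trans (by exact_mod_cast le_max_left m1 m2) hk)
  · intro w k hlen hocc N
    have hocc' := Stmt13Aux.occ_rev hocc
    have hpos : (m2 : ℤ) ≤ -k - w.length + 1 := by
      have h : (m2 : ℤ) ≤ ((max m1 m2 : ℕ) : ℤ) := by exact_mod_cast le_max_right m1 m2
      omega
    obtain ⟨p, hp, hpo⟩ := h2 w.reverse (-k - w.length + 1) hpos hocc' (-N + 1)
    have hback := Stmt13Aux.occ_rev hpo
    have hxx : (fun n : ℤ => (fun n : ℤ => x (-n)) (-n)) = x := by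
      funext n
      simp
    rw [hxx, List.reverse_reverse, List.length_reverse] at hback
    refine ⟨-p - w.length + 1, by omega, hback⟩
end
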